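/- arXiv:2106.14837 — 6 statements merged into one kernel-verified Lean document; each statement's English description precedes it below -/
import Mathlib

section
/- Let n ≥ 2, let Γ ⊂ ℝⁿ be an open convex cone with vertex at the origin, symmetric under permutations of coordinates, containing the positive cone Γ_n, with ∂Γ ≠ ∅, and let f : Γ → ℝ be a C¹ concave function such that f_i(λ) := ∂f/∂λ_i(λ) > 0 for every λ ∈ Γ and every 1 ≤ i ≤ n. Then the following two statements are equivalent: (a) for every σ < sup_Γ f and every λ ∈ Γ there exists T > 0 such that f(tλ) > σ for all t ≥ T; (b) for all λ, μ ∈ Γ one has ∑_{i=1}^n f_i(λ) μ_i > 0. -/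
/-- Lemma on characterization of concave functions satisfying the
structural condition. Let `n ≥ 2`, let `Γ ⊂ ℝⁿ` be an open convex symmetric cone with
vertex at the origin containing the positive cone, with nonempty boundary, and let
`f` be a `C¹` concave function on `Γ` with positive partial derivatives. Then the
condition "for every `σ < sup_Γ f` and every `λ ∈ Γ`, `f(tλ) > σ` for all large `t`"
is equivalent to "`∑ i, f_i(λ) μ_i > 0` for all `λ, μ ∈ Γ`". -/
theorem stmt_0 (n : ℕ) (hn : 2 ≤ n) (Γ : Set (Fin n → ℝ)) (f : (Fin n → ℝ) → ℝ)
    (hΓopen : IsOpen Γ) (hΓconv : Convex ℝ Γ)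
    (hΓcone : ∀ x ∈ Γ, ∀ t : ℝ, 0 < t → t • x ∈ Γ)
    (hΓsym : ∀ σ : Equiv.Perm (Fin n), ∀ x ∈ Γ, x ∘ σ ∈ Γ)
    (hΓpos : {x : Fin n → ℝ | ∀ i, 0 < x i} ⊆ Γ)
    (hΓbd : (frontier Γ).Nonempty)
    (hC1 : ContDiffOn ℝ 1 f Γ)
    (hconc : ConcaveOn ℝ Γ f)
    (hfi : ∀ x ∈ Γ, ∀ i : Fin n, 0 < fderiv ℝ f x (Pi.single i 1)) :
    (∀ σ : ℝ, (∃ y ∈ Γ, σ < f y) → ∀ x ∈ Γ, ∃ T > (0 : ℝ), ∀ t ≥ T, σ < f (t • x)) ↔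
      (∀ x ∈ Γ, ∀ μ ∈ Γ, 0 < ∑ i : Fin n, fderiv ℝ f x (Pi.single i 1) * μ i) := by
  have hnpos : 0 < n := by omega
  haveI : Nonempty (Fin n) := Fin.pos_iff_nonempty.mp hnpos
  have hdiff : ∀ x ∈ Γ, DifferentiableAt ℝ f x := fun x hx =>
    ((hC1.differentiableOn one_ne_zero) x hx).differentiableAt (hΓopen.mem_nhds hx)
  -- linearity
  have hsum : ∀ x, ∀ μ : Fin n → ℝ,
      ∑ i, fderiv ℝ f x (Pi.single i 1) * μ i = fderiv ℝ f x μ := by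
    intro x μ
    have hμ : μ = ∑ i, μ i • (Pi.single i (1:ℝ) : Fin n → ℝ) := by
      ext j
      simp [Pi.single_apply, Finset.sum_apply, Finset.sum_ite_eq]
    conv_rhs => rw [hμ]
    rw [map_sum]
    refine Finset.sum_congr rfl fun i _ => ?_
    rw [ContinuousLinearMap.map_smul]
    simp [mul_comm]
  -- closure under addition
  have hadd : ∀ x ∈ Γ, ∀ y ∈ Γ, x + y ∈ Γ := by
    intro x hx y hy
    have h2 := hΓcone _ (hΓconv hx hy (by norm_num : (0:ℝ) ≤ 1/2)
      (by norm_num : (0:ℝ) ≤ 1/2) (by norm_num)) 2 (by norm_num)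
    have : (2:ℝ) • ((1/2 : ℝ) • x + (1/2 : ℝ) • y) = x + y := by
      rw [smul_add, smul_smul, smul_smul]; norm_num
    rwa [this] at h2
  -- segments
  have hseg : ∀ x ∈ Γ, ∀ v ∈ Γ, ∀ s ∈ Set.Icc (0:ℝ) 1, x + s • v ∈ Γ := by
    intro x hx v hv s hs
    rcases eq_or_lt_of_le hs.1 with h | h
    · simpa [← h] using hx
    · exact hadd x hx _ (hΓcone v hv s h)
  -- derivative of f along a line
  have hline : ∀ (x v : Fin n → ℝ) (s : ℝ), x + s • v ∈ Γ →
      HasDerivAt (fun s : ℝ => f (x + s • v)) (fderiv ℝ f (x + s • v) v) s := by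
    intro x v s hmem
    have h1 : HasDerivAt (fun s : ℝ => x + s • v) v s := by
      have := ((hasDerivAt_id s).smul_const v).const_add x
      simpa using this
    exact (hdiff _ hmem).hasFDerivAt.comp_hasDerivAt s h1
  -- monotonicity
  have hmono : ∀ x ∈ Γ, ∀ v, (∀ s ∈ Set.Icc (0:ℝ) 1, x + s • v ∈ Γ) →
      (∀ z ∈ Γ, 0 < fderiv ℝ f z v) → f x < f (x + v) := by
    intro x hx v hsg hpos
    have key : StrictMonoOn (fun s : ℝ => f (x + s • v)) (Set.Icc 0 1) := by
      apply strictMonoOn_of_deriv_pos (convex_Icc 0 1)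
      · exact (hC1.continuousOn).comp (Continuous.continuousOn (by continuity))
          (fun s hs => hsg s hs)
      · intro s hs
        rw [interior_Icc] at hs
        have hmem := hsg s ⟨hs.1.le, hs.2.le⟩
        rw [(hline x v s hmem).deriv]
        exact hpos _ hmem
    have := key (Set.mem_Icc.mpr ⟨le_refl 0, zero_le_one⟩)
      (Set.mem_Icc.mpr ⟨zero_le_one, le_refl 1⟩) one_pos
    simpa using this
  -- gradient inequality from concavity
  have hgrad : ∀ x ∈ Γ, ∀ z ∈ Γ, f z ≤ f x + fderiv ℝ f x (z - x) := by
    intro x hx z hz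
    set φ : ℝ → ℝ := fun s => f (x + s • (z - x)) with hφ
    have hmem0 : x + (0:ℝ) • (z - x) ∈ Γ := by simpa using hx
    have hd : HasDerivAt φ (fderiv ℝ f (x + (0:ℝ) • (z - x)) (z - x)) 0 :=
      hline x (z - x) 0 hmem0
    have hd' : HasDerivAt φ (fderiv ℝ f x (z - x)) 0 := by
      have : x + (0:ℝ) • (z - x) = x := by simp
      rwa [this] at hd
    have hslope : ∀ s ∈ Set.Ioc (0:ℝ) 1, f z - f x ≤ slope φ 0 s := by
      intro s hs
      have hcv := hconc.2 hx hz (by linarith [hs.2] : (0:ℝ) ≤ 1 - s)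
        hs.1.le (by ring)
      have heq : (1 - s) • x + s • z = x + s • (z - x) := by
        rw [smul_sub]; module
      rw [heq] at hcv
      have hφ0 : φ 0 = f x := by simp [hφ]
      rw [slope_def_field, hφ0, sub_zero, le_div_iff₀ hs.1]
      have : φ s ≥ (1 - s) * f x + s * f z := hcv
      nlinarith
    have htend : Filter.Tendsto (slope φ 0) (nhdsWithin 0 (Set.Ioi 0))
        (nhds (fderiv ℝ f x (z - x))) :=
      (hasDerivAt_iff_tendsto_slope.mp hd').mono_left
        (nhdsWithin_mono 0 (fun a ha => Set.mem_compl_singleton_iff.mpr (ne_of_gt ha)))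
    have hle : f z - f x ≤ fderiv ℝ f x (z - x) := by
      refine ge_of_tendsto htend ?_
      filter_upwards [Ioc_mem_nhdsGT_of_mem (Set.mem_Ico.mpr ⟨le_refl 0, one_pos⟩)] with s hs
      exact hslope s hs
    linarith
  have hone : (fun _ : Fin n => (1:ℝ)) ∈ Γ := hΓpos (fun i => one_pos)
  constructor
  · -- (a) → (b)
    intro ha x hx μ hμ
    rw [hsum]
    by_contra hle
    push_neg at hle
    by_cases hxx : fderiv ℝ f x x < 0
    · obtain ⟨T, hT, hTa⟩ := ha (f x - 1) ⟨x, hx, by linarith⟩ x hx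
      set a := fderiv ℝ f x x with ha'
      set t := max T (1 + 1 / (-a)) with ht'
      have htT : T ≤ t := le_max_left _ _
      have ht1 : 1 + 1 / (-a) ≤ t := le_max_right _ _
      have htpos : 0 < t := lt_of_lt_of_le hT htT
      have hmem : t • x ∈ Γ := hΓcone x hx t htpos
      have h1 : f (t • x) ≤ f x + fderiv ℝ f x (t • x - x) := hgrad x hx _ hmem
      have h2 : t • x - x = (t - 1) • x := by module
      rw [h2, map_smul, smul_eq_mul] at h1
      have hna : 0 < -a := by linarith
      have h3 : (t - 1) * a ≤ -1 := by
        have h4 : 1 / (-a) ≤ t - 1 := by linarith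
        have := mul_le_mul_of_nonneg_right h4 hna.le
        rw [div_mul_cancel₀ _ (ne_of_gt hna)] at this
        nlinarith
      have := hTa t htT
      linarith
    · push_neg at hxx
      have hxone : x + (fun _ => (1:ℝ)) ∈ Γ := hadd x hx _ hone
      have hfone : f x < f (x + fun _ => (1:ℝ)) := by
        refine hmono x hx _ (hseg x hx _ hone) ?_
        intro z hz
        rw [← hsum]
        exact Finset.sum_pos (fun i _ => by
          simpa using hfi z hz i) Finset.univ_nonempty
      obtain ⟨T, hT, hTa⟩ := ha (f x) ⟨_, hxone, hfone⟩ μ hμ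
      have hmem : T • μ ∈ Γ := hΓcone μ hμ T hT
      have h1 : f (T • μ) ≤ f x + fderiv ℝ f x (T • μ - x) := hgrad x hx _ hmem
      have h2 : fderiv ℝ f x (T • μ - x) = T * fderiv ℝ f x μ - fderiv ℝ f x x := by
        rw [map_sub, map_smul, smul_eq_mul]
      have h3 : T * fderiv ℝ f x μ ≤ 0 := mul_nonpos_of_nonneg_of_nonpos hT.le hle
      have := hTa T le_rfl
      linarith
  · -- (b) → (a)
    intro hb σ hσ x hx
    obtain ⟨y, hy, hfy⟩ := hσ
    have hpos' : ∀ z ∈ Γ, ∀ w ∈ Γ, 0 < fderiv ℝ f z w := by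
      intro z hz w hw
      rw [← hsum]
      exact hb z hz w hw
    obtain ⟨ε, hε, hball⟩ := Metric.isOpen_iff.mp hΓopen x hx
    refine ⟨(‖y‖ + 1) / ε, by positivity, ?_⟩
    intro t hT
    have htpos : 0 < t := lt_of_lt_of_le (by positivity) hT
    have hmem : x - t⁻¹ • y ∈ Γ := by
      apply hball
      rw [Metric.mem_ball, dist_eq_norm]
      have : x - t⁻¹ • y - x = -(t⁻¹ • y) := by module
      rw [this, norm_neg, norm_smul, norm_inv, Real.norm_eq_abs, abs_of_pos htpos]
      have h5 : ‖y‖ < t * ε := by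
        have := mul_le_mul_of_nonneg_right hT (le_of_lt hε)
        rw [div_mul_cancel₀ _ (ne_of_gt hε)] at this
        linarith
      rw [inv_mul_lt_iff₀ htpos]
      linarith
    set w := t • x - y with hw'
    have hwΓ : w ∈ Γ := by
      have := hΓcone _ hmem t htpos
      have heq : t • (x - t⁻¹ • y) = w := by
        rw [smul_sub, smul_smul, mul_inv_cancel₀ (ne_of_gt htpos), one_smul]
      rwa [heq] at this
    have hyw : y + w = t • x := by rw [hw']; module
    have := hmono y hy w (hseg y hy w hwΓ) (fun z hz => hpos' z hz w hwΓ)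
    rw [hyw] at this
    linarith
end

section
/- Let n ≥ 2 and ε > 0. Given real numbers d_1,…,d_{n−1}, complex numbers a_1,…,a_{n−1}, and a real parameter 𝐚, let A be the n×n Hermitian arrow matrix determined by these data. If 𝐚 ≥ ((2n−3)/ε) ∑_{i=1}^{n−1} |a_i|² + (n−1) ∑_{i=1}^{n−1} |d_i| + (n−2)ε/(2n−3), then the eigenvalues of A (listed with multiplicity) admit an enumeration λ_1, …, λ_n such that |d_α − λ_α| < ε for every 1 ≤ α ≤ n−1, and 0 ≤ λ_n − 𝐚 < (n−1)ε. -/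
open Matrix Finset


/-- The `(m+1) × (m+1)` Hermitian "arrow" matrix with diagonal entries
`d 0, …, d (m-1), 𝐚`, last column `a 0, …, a (m-1)` above the corner, last row the
conjugates, and all other off-diagonal entries `0`. -/
def arrowMatrix (m : ℕ) (d : Fin m → ℝ) (a : Fin m → ℂ) (aa : ℝ) :
    Matrix (Fin (m + 1)) (Fin (m + 1)) ℂ :=
  Matrix.of fun i j =>
    if hi : i = Fin.last m then
      if hj : j = Fin.last m then (aa : ℂ) else (starRingEnd ℂ) (a (j.castPred hj))
    else
      if hj : j = Fin.last m then a (i.castPred hi)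
      else if i = j then (d (i.castPred hi) : ℂ) else 0

namespace ArrowAux

variable {N : ℕ} {A : Matrix (Fin N) (Fin N) ℂ}

/-- The real quadratic form of a matrix on Euclidean space. -/
noncomputable def quad (A : Matrix (Fin N) (Fin N) ℂ) (w : EuclideanSpace ℂ (Fin N)) : ℝ :=
  (inner (𝕜 := ℂ) w (Matrix.toEuclideanLin A w)).re

lemma quad_eq_sum (hA : A.IsHermitian) (w : EuclideanSpace ℂ (Fin N)) :
    quad A w = ∑ j, hA.eigenvalues j * ‖hA.eigenvectorBasis.repr w j‖ ^ 2 := by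
  classical
  set b := hA.eigenvectorBasis with hb
  have hTb : ∀ i, Matrix.toEuclideanLin A (b i) = (hA.eigenvalues i : ℂ) • b i := by
    intro i
    apply (WithLp.equiv 2 _).injective
    have := hA.mulVec_eigenvectorBasis i
    simpa [Matrix.toEuclideanLin_apply] using this
  have hrepr : ∀ j, b.repr (Matrix.toEuclideanLin A w) j
      = (hA.eigenvalues j : ℂ) * b.repr w j := by
    intro j
    have hsym := (Matrix.isHermitian_iff_isSymmetric.1 hA)
    rw [b.repr_apply_apply, b.repr_apply_apply]
    have := hsym (b j) w
    rw [← this, hTb j, inner_smul_left]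
    simp [Complex.conj_ofReal]
  have hinner : (inner (𝕜 := ℂ) w (Matrix.toEuclideanLin A w))
      = ∑ j, (starRingEnd ℂ) (b.repr w j) * ((hA.eigenvalues j : ℂ) * b.repr w j) := by
    rw [← b.repr.inner_map_map w (Matrix.toEuclideanLin A w)]
    rw [PiLp.inner_apply]
    refine Finset.sum_congr rfl fun j _ => ?_
    rw [hrepr j]
    simp [RCLike.inner_apply]
    ring
  rw [quad, hinner]
  rw [Complex.re_sum]
  refine Finset.sum_congr rfl fun j _ => ?_
  have : (starRingEnd ℂ) (b.repr w j) * ((hA.eigenvalues j : ℂ) * b.repr w j)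
      = (hA.eigenvalues j : ℂ) * ((starRingEnd ℂ) (b.repr w j) * b.repr w j) := by ring
  rw [this]
  rw [Complex.conj_mul']
  rw [← Complex.ofReal_pow, ← Complex.ofReal_mul, Complex.ofReal_re]

lemma norm_sq_eq_sum_repr (b : OrthonormalBasis (Fin N) ℂ (EuclideanSpace ℂ (Fin N)))
    (w : EuclideanSpace ℂ (Fin N)) : ‖w‖ ^ 2 = ∑ j, ‖b.repr w j‖ ^ 2 := by
  rw [← b.repr.norm_map w]
  rw [EuclideanSpace.norm_eq]
  rw [Real.sq_sqrt (by positivity)]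


lemma repr_zero_of_mem_span (b : OrthonormalBasis (Fin N) ℂ (EuclideanSpace ℂ (Fin N)))
    (J : Finset (Fin N)) {w : EuclideanSpace ℂ (Fin N)}
    (hw : w ∈ Submodule.span ℂ (Set.range fun j : J => b j)) {i : Fin N} (hi : i ∉ J) :
    b.repr w i = 0 := by
  induction hw using Submodule.span_induction with
  | mem x hx =>
    obtain ⟨j, rfl⟩ := hx
    rw [b.repr_self]
    have : i ≠ (j : Fin N) := fun h => hi (h ▸ j.2)
    simp [EuclideanSpace.single_apply, this]
  | zero => simp
  | add x y _ _ hx hy => simp [hx, hy]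
  | smul c x _ hx => simp [hx]

lemma finrank_span_orthonormal {ι : Type*} [Fintype ι] [DecidableEq ι]
    {v : ι → EuclideanSpace ℂ (Fin N)} (hv : Orthonormal ℂ v) (J : Finset ι) :
    Module.finrank ℂ ↥(Submodule.span ℂ (Set.range fun j : J => v j)) = J.card := by
  have hli : LinearIndependent ℂ (fun j : J => v j) :=
    hv.linearIndependent.comp _ Subtype.val_injective
  rw [finrank_span_eq_card hli, Fintype.card_coe]

/-- If two submodules have total finrank exceeding that of the space, their intersection
contains a nonzero vector. -/
lemma exists_mem_inf {W V : Submodule ℂ (EuclideanSpace ℂ (Fin N))}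
    (h : N < Module.finrank ℂ ↥W + Module.finrank ℂ ↥V) :
    ∃ w : EuclideanSpace ℂ (Fin N), w ≠ 0 ∧ w ∈ W ∧ w ∈ V := by
  have hsum := Submodule.finrank_sup_add_finrank_inf_eq W V
  have hle : Module.finrank ℂ ↥(W ⊔ V) ≤ N := by
    have h2 : Module.finrank ℂ (EuclideanSpace ℂ (Fin N)) = N := by
      rw [finrank_euclideanSpace, Fintype.card_fin]
    have h3 := Submodule.finrank_le (W ⊔ V)
    rw [h2] at h3
    exact h3
  have hpos : 0 < Module.finrank ℂ ↥(W ⊓ V) := by omega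
  have hne : W ⊓ V ≠ ⊥ := by
    intro hbot
    rw [hbot] at hpos
    simp at hpos
  obtain ⟨w, hw, hw0⟩ := Submodule.exists_mem_ne_zero_of_ne_bot hne
  exact ⟨w, hw0, (Submodule.mem_inf.1 hw).1, (Submodule.mem_inf.1 hw).2⟩

/-- Vectors supported on a coordinate set `s` form (the span of singles), with member
coordinates vanishing off `s`. -/
lemma coordSpan_vanish {s : Finset (Fin N)} {w : EuclideanSpace ℂ (Fin N)}
    (hw : w ∈ Submodule.span ℂ
      (Set.range fun i : s => (EuclideanSpace.single (i : Fin N) (1:ℂ)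
        : EuclideanSpace ℂ (Fin N)))) {j : Fin N} (hj : j ∉ s) : w j = 0 := by
  classical
  have hb : ∀ i : s, (EuclideanSpace.single (i : Fin N) (1:ℂ) : EuclideanSpace ℂ (Fin N))
      = EuclideanSpace.basisFun (Fin N) ℂ i := by
    intro i; rw [EuclideanSpace.basisFun_apply]
  have heq : (fun i : s => (EuclideanSpace.single (i : Fin N) (1:ℂ) : EuclideanSpace ℂ (Fin N)))
      = fun i : s => EuclideanSpace.basisFun (Fin N) ℂ i := funext hb
  rw [heq] at hw
  have := repr_zero_of_mem_span (EuclideanSpace.basisFun (Fin N) ℂ) s hw hj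
  rwa [EuclideanSpace.basisFun_repr] at this

lemma finrank_coordSpan (s : Finset (Fin N)) :
    Module.finrank ℂ ↥(Submodule.span ℂ
      (Set.range fun i : s => (EuclideanSpace.single (i : Fin N) (1:ℂ)
        : EuclideanSpace ℂ (Fin N)))) = s.card := by
  classical
  have : Orthonormal ℂ (fun i : Fin N => (EuclideanSpace.single i (1:ℂ)
      : EuclideanSpace ℂ (Fin N))) := by
    have := (EuclideanSpace.basisFun (Fin N) ℂ).orthonormal
    have hfun : ⇑(EuclideanSpace.basisFun (Fin N) ℂ)
        = fun i : Fin N => (EuclideanSpace.single i (1:ℂ) : EuclideanSpace ℂ (Fin N)) :=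
      funext fun i => EuclideanSpace.basisFun_apply ..
    rwa [hfun] at this
  exact finrank_span_orthonormal this s


section VBounds

variable (hA : A.IsHermitian) {J : Finset (Fin N)} {c : ℝ} {w : EuclideanSpace ℂ (Fin N)}

lemma quad_le_of_mem (hJ : ∀ j ∈ J, hA.eigenvalues j ≤ c)
    (hw : w ∈ Submodule.span ℂ (Set.range fun j : J => hA.eigenvectorBasis j)) :
    quad A w ≤ c * ‖w‖ ^ 2 := by
  rw [quad_eq_sum hA, norm_sq_eq_sum_repr hA.eigenvectorBasis, Finset.mul_sum]
  refine Finset.sum_le_sum fun j _ => ?_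
  by_cases hj : j ∈ J
  · exact mul_le_mul_of_nonneg_right (hJ j hj) (by positivity)
  · rw [repr_zero_of_mem_span hA.eigenvectorBasis J hw hj]
    simp

lemma quad_ge_of_mem (hJ : ∀ j ∈ J, c ≤ hA.eigenvalues j)
    (hw : w ∈ Submodule.span ℂ (Set.range fun j : J => hA.eigenvectorBasis j)) :
    c * ‖w‖ ^ 2 ≤ quad A w := by
  rw [quad_eq_sum hA, norm_sq_eq_sum_repr hA.eigenvectorBasis, Finset.mul_sum]
  refine Finset.sum_le_sum fun j _ => ?_
  by_cases hj : j ∈ J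
  · exact mul_le_mul_of_nonneg_right (hJ j hj) (by positivity)
  · rw [repr_zero_of_mem_span hA.eigenvectorBasis J hw hj]
    simp

lemma quad_lt_of_mem (hJ : ∀ j ∈ J, hA.eigenvalues j < c)
    (hw : w ∈ Submodule.span ℂ (Set.range fun j : J => hA.eigenvectorBasis j))
    (hw0 : w ≠ 0) :
    quad A w < c * ‖w‖ ^ 2 := by
  rw [quad_eq_sum hA, norm_sq_eq_sum_repr hA.eigenvectorBasis, Finset.mul_sum]
  have hr0 : ∃ j, hA.eigenvectorBasis.repr w j ≠ 0 := by
    by_contra h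
    push_neg at h
    apply hw0
    have : hA.eigenvectorBasis.repr w = 0 := by
      ext j
      exact h j
    simpa using hA.eigenvectorBasis.repr.map_eq_zero_iff.1 this
  obtain ⟨j0, hj0⟩ := hr0
  have hj0J : j0 ∈ J := by
    by_contra hj
    exact hj0 (repr_zero_of_mem_span hA.eigenvectorBasis J hw hj)
  refine Finset.sum_lt_sum (fun j _ => ?_) ⟨j0, Finset.mem_univ j0, ?_⟩
  · by_cases hj : j ∈ J
    · exact mul_le_mul_of_nonneg_right (hJ j hj).le (by positivity)
    · rw [repr_zero_of_mem_span hA.eigenvectorBasis J hw hj]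
      simp
  · have : (0:ℝ) < ‖hA.eigenvectorBasis.repr w j0‖ ^ 2 := pow_pos (norm_pos_iff.mpr hj0) 2
    exact mul_lt_mul_of_pos_right (hJ j0 hj0J) this

end VBounds

section Counting

variable (hA : A.IsHermitian)

/-- If the quadratic form is `> c‖w‖²` on a coordinate subspace of dimension `s.card`,
then at least `s.card` eigenvalues exceed `c`. -/
lemma card_le_count_gt {c : ℝ} {s : Finset (Fin N)}
    (hW : ∀ w : EuclideanSpace ℂ (Fin N), (∀ j, j ∉ s → w j = 0) → w ≠ 0 →
      c * ‖w‖ ^ 2 < quad A w) :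
    s.card ≤ (univ.filter fun j => c < hA.eigenvalues j).card := by
  classical
  by_contra h
  push_neg at h
  set J : Finset (Fin N) := univ.filter fun j => hA.eigenvalues j ≤ c with hJ
  have hcards : (univ.filter fun j => c < hA.eigenvalues j).card + J.card = N := by
    rw [hJ]
    have := Finset.card_filter_add_card_filter_not
      (s := (univ : Finset (Fin N))) (p := fun j => c < hA.eigenvalues j)
    simp only [Finset.card_univ, Fintype.card_fin, not_lt] at this
    exact this
  obtain ⟨w, hw0, hwW, hwV⟩ := exists_mem_inf (W := Submodule.span ℂ
      (Set.range fun i : s => (EuclideanSpace.single (i : Fin N) (1:ℂ)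
        : EuclideanSpace ℂ (Fin N))))
      (V := Submodule.span ℂ (Set.range fun j : J => hA.eigenvectorBasis j)) (by
    rw [finrank_coordSpan, finrank_span_orthonormal hA.eigenvectorBasis.orthonormal]
    omega)
  have h1 := hW w (fun j hj => coordSpan_vanish hwW hj) hw0
  have h2 := quad_le_of_mem hA (fun j hj => (Finset.mem_filter.1 hj).2) hwV
  linarith

/-- If the quadratic form is `< c‖w‖²` on a coordinate subspace of dimension `s.card`,
then at least `s.card` eigenvalues are below `c`. -/
lemma card_le_count_lt {c : ℝ} {s : Finset (Fin N)}
    (hW : ∀ w : EuclideanSpace ℂ (Fin N), (∀ j, j ∉ s → w j = 0) → w ≠ 0 →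
      quad A w < c * ‖w‖ ^ 2) :
    s.card ≤ (univ.filter fun j => hA.eigenvalues j < c).card := by
  classical
  by_contra h
  push_neg at h
  set J : Finset (Fin N) := univ.filter fun j => c ≤ hA.eigenvalues j with hJ
  have hcards : (univ.filter fun j => hA.eigenvalues j < c).card + J.card = N := by
    rw [hJ]
    have := Finset.card_filter_add_card_filter_not
      (s := (univ : Finset (Fin N))) (p := fun j => hA.eigenvalues j < c)
    simp only [Finset.card_univ, Fintype.card_fin, not_lt] at this
    exact this
  obtain ⟨w, hw0, hwW, hwV⟩ := exists_mem_inf (W := Submodule.span ℂ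
      (Set.range fun i : s => (EuclideanSpace.single (i : Fin N) (1:ℂ)
        : EuclideanSpace ℂ (Fin N))))
      (V := Submodule.span ℂ (Set.range fun j : J => hA.eigenvectorBasis j)) (by
    rw [finrank_coordSpan, finrank_span_orthonormal hA.eigenvectorBasis.orthonormal]
    omega)
  have h1 := hW w (fun j hj => coordSpan_vanish hwW hj) hw0
  have h2 := quad_ge_of_mem hA (fun j hj => (Finset.mem_filter.1 hj).2) hwV
  linarith

/-- If the quadratic form is `≥ c‖w‖²` on a coordinate subspace of dimension `s.card`,
then at least `s.card` eigenvalues are `≥ c`. -/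
lemma card_le_count_ge {c : ℝ} {s : Finset (Fin N)}
    (hW : ∀ w : EuclideanSpace ℂ (Fin N), (∀ j, j ∉ s → w j = 0) →
      c * ‖w‖ ^ 2 ≤ quad A w) :
    s.card ≤ (univ.filter fun j => c ≤ hA.eigenvalues j).card := by
  classical
  by_contra h
  push_neg at h
  set J : Finset (Fin N) := univ.filter fun j => hA.eigenvalues j < c with hJ
  have hcards : (univ.filter fun j => c ≤ hA.eigenvalues j).card + J.card = N := by
    rw [hJ]
    have := Finset.card_filter_add_card_filter_not
      (s := (univ : Finset (Fin N))) (p := fun j => c ≤ hA.eigenvalues j)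
    simp only [Finset.card_univ, Fintype.card_fin, not_le] at this
    exact this
  obtain ⟨w, hw0, hwW, hwV⟩ := exists_mem_inf (W := Submodule.span ℂ
      (Set.range fun i : s => (EuclideanSpace.single (i : Fin N) (1:ℂ)
        : EuclideanSpace ℂ (Fin N))))
      (V := Submodule.span ℂ (Set.range fun j : J => hA.eigenvectorBasis j)) (by
    rw [finrank_coordSpan, finrank_span_orthonormal hA.eigenvectorBasis.orthonormal]
    omega)
  have h1 := hW w (fun j hj => coordSpan_vanish hwW hj)
  have h2 := quad_lt_of_mem hA (fun j hj => (Finset.mem_filter.1 hj).2) hwV hw0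
  linarith

end Counting


section Arrow

variable {m : ℕ} (d : Fin m → ℝ) (a : Fin m → ℂ) (aa : ℝ)

lemma arrow_cc (i j : Fin m) : arrowMatrix m d a aa i.castSucc j.castSucc
    = if i = j then (d i : ℂ) else 0 := by
  have hi := (Fin.castSucc_lt_last i).ne
  have hj := (Fin.castSucc_lt_last j).ne
  simp only [arrowMatrix, Matrix.of_apply, dif_neg hi, dif_neg hj, Fin.castPred_castSucc,
    Fin.castSucc_inj]

lemma arrow_cl (i : Fin m) : arrowMatrix m d a aa i.castSucc (Fin.last m) = a i := by
  have hi := (Fin.castSucc_lt_last i).ne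
  simp only [arrowMatrix, Matrix.of_apply, dif_neg hi, dif_pos rfl, Fin.castPred_castSucc]

lemma arrow_lc (j : Fin m) : arrowMatrix m d a aa (Fin.last m) j.castSucc
    = (starRingEnd ℂ) (a j) := by
  have hj := (Fin.castSucc_lt_last j).ne
  simp only [arrowMatrix, Matrix.of_apply, dif_pos rfl, dif_neg hj, Fin.castPred_castSucc]

lemma arrow_ll : arrowMatrix m d a aa (Fin.last m) (Fin.last m) = (aa : ℂ) := by
  simp only [arrowMatrix, Matrix.of_apply, dif_pos rfl]
  simp

lemma arrow_mulVec_cast (w : Fin (m+1) → ℂ) (i : Fin m) :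
    (arrowMatrix m d a aa *ᵥ w) i.castSucc
      = (d i : ℂ) * w i.castSucc + a i * w (Fin.last m) := by
  have : (arrowMatrix m d a aa *ᵥ w) i.castSucc
      = ∑ k, arrowMatrix m d a aa i.castSucc k * w k := rfl
  rw [this, Fin.sum_univ_castSucc]
  rw [arrow_cl]
  congr 1
  rw [Finset.sum_congr rfl (fun k _ => by rw [arrow_cc])]
  simp only [ite_mul, zero_mul]
  rw [Finset.sum_ite_eq]
  simp

lemma arrow_mulVec_last (w : Fin (m+1) → ℂ) :
    (arrowMatrix m d a aa *ᵥ w) (Fin.last m)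
      = (∑ i, (starRingEnd ℂ) (a i) * w i.castSucc) + (aa : ℂ) * w (Fin.last m) := by
  have : (arrowMatrix m d a aa *ᵥ w) (Fin.last m)
      = ∑ k, arrowMatrix m d a aa (Fin.last m) k * w k := rfl
  rw [this, Fin.sum_univ_castSucc, arrow_ll]
  congr 1
  exact Finset.sum_congr rfl (fun k _ => by rw [arrow_lc])

lemma arrow_quad (w : EuclideanSpace ℂ (Fin (m+1))) :
    quad (arrowMatrix m d a aa) w
      = ∑ i : Fin m, (d i * ‖w i.castSucc‖ ^ 2
          + 2 * ((starRingEnd ℂ) (w (Fin.last m)) * (starRingEnd ℂ) (a i) * w i.castSucc).re)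
        + aa * ‖w (Fin.last m)‖ ^ 2 := by
  classical
  have hinner : (inner (𝕜 := ℂ) w (Matrix.toEuclideanLin (arrowMatrix m d a aa) w))
      = ∑ j, (starRingEnd ℂ) (w j) * (arrowMatrix m d a aa *ᵥ (fun k => w k)) j := by
    rw [PiLp.inner_apply]
    exact Finset.sum_congr rfl fun j _ => by rw [RCLike.inner_apply, mul_comm]; rfl
  have hsplit : (inner (𝕜 := ℂ) w (Matrix.toEuclideanLin (arrowMatrix m d a aa) w))
      = ∑ i : Fin m, ((d i : ℂ) * ((starRingEnd ℂ) (w i.castSucc) * w i.castSucc)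
          + ((starRingEnd ℂ) (w (Fin.last m)) * (starRingEnd ℂ) (a i) * w i.castSucc
            + (starRingEnd ℂ) ((starRingEnd ℂ) (w (Fin.last m)) * (starRingEnd ℂ) (a i)
                * w i.castSucc)))
        + (aa : ℂ) * ((starRingEnd ℂ) (w (Fin.last m)) * w (Fin.last m)) := by
    rw [hinner, Fin.sum_univ_castSucc]
    rw [arrow_mulVec_last]
    rw [Finset.sum_congr rfl (fun i _ => by rw [arrow_mulVec_cast d a aa (fun k => w k) i])]
    rw [mul_add, Finset.mul_sum, ← add_assoc, ← Finset.sum_add_distrib]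
    congr 1
    · refine Finset.sum_congr rfl fun i _ => ?_
      simp only [_root_.map_mul, Complex.conj_conj]
      ring
    · ring
  have re_helper : ∀ (r : ℝ) (z C : ℂ),
      ((r:ℂ) * ((starRingEnd ℂ) z * z) + (C + (starRingEnd ℂ) C)).re
        = r * ‖z‖ ^ 2 + 2 * C.re := by
    intro r z C
    rw [Complex.conj_mul', Complex.add_conj, ← Complex.ofReal_pow, ← Complex.ofReal_mul,
      ← Complex.ofReal_add, Complex.ofReal_re]
  have re_helper2 : ∀ (r : ℝ) (z : ℂ),
      ((r:ℂ) * ((starRingEnd ℂ) z * z)).re = r * ‖z‖ ^ 2 := by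
    intro r z
    rw [Complex.conj_mul', ← Complex.ofReal_pow, ← Complex.ofReal_mul, Complex.ofReal_re]
  rw [quad, hsplit]
  rw [Complex.add_re, Complex.re_sum, re_helper2]
  congr 1
  exact Finset.sum_congr rfl fun i _ => re_helper _ _ _

lemma norm_sq_coords (w : EuclideanSpace ℂ (Fin (m+1))) :
    ‖w‖ ^ 2 = ∑ i : Fin m, ‖w i.castSucc‖ ^ 2 + ‖w (Fin.last m)‖ ^ 2 := by
  rw [← Fin.sum_univ_castSucc (f := fun j => ‖w j‖ ^ 2)]
  rw [EuclideanSpace.norm_eq, Real.sq_sqrt (by positivity)]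


lemma exists_coord_ne_zero {K : ℕ} {w : EuclideanSpace ℂ (Fin K)} (hw : w ≠ 0) :
    ∃ j, w j ≠ 0 := by
  by_contra h
  push_neg at h
  exact hw (PiLp.ext fun i => by simp [h i])

lemma arrow_bound_lt (x : ℝ) (w : EuclideanSpace ℂ (Fin (m+1)))
    (hsupp : ∀ j, j ∉ (univ.filter fun i => d i < x).image Fin.castSucc → w j = 0)
    (hw0 : w ≠ 0) :
    quad (arrowMatrix m d a aa) w < x * ‖w‖ ^ 2 := by
  classical
  have hlast : w (Fin.last m) = 0 := by
    refine hsupp _ ?_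
    simp only [Finset.mem_image, Finset.mem_filter]
    rintro ⟨i, _, hcast⟩
    exact (Fin.castSucc_lt_last i).ne hcast
  have hvan : ∀ i : Fin m, ¬ d i < x → w i.castSucc = 0 := by
    intro i hi
    refine hsupp _ ?_
    simp only [Finset.mem_image, Finset.mem_filter, Finset.mem_univ, true_and]
    rintro ⟨i', hi', hcast⟩
    exact hi (Fin.castSucc_inj.1 hcast ▸ hi')
  obtain ⟨j0, hj0⟩ := exists_coord_ne_zero hw0
  have hj0ne : j0 ≠ Fin.last m := fun h => hj0 (h ▸ hlast)
  obtain ⟨i0, rfl⟩ := Fin.exists_castSucc_eq.2 hj0ne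
  have hi0 : d i0 < x := by
    by_contra h
    exact hj0 (hvan i0 h)
  rw [arrow_quad, norm_sq_coords, hlast]
  simp only [norm_zero, map_zero, zero_mul, mul_zero, Complex.zero_re, add_zero]
  have hz : (0:ℝ) ^ 2 = 0 := by norm_num
  rw [hz, mul_zero, add_zero, add_zero, Finset.mul_sum]
  refine Finset.sum_lt_sum (fun i _ => ?_) ⟨i0, Finset.mem_univ i0, ?_⟩
  · by_cases hwi : w i.castSucc = 0
    · simp [hwi]
    · have : d i < x := by
        by_contra h
        exact hwi (hvan i h)
      exact mul_le_mul_of_nonneg_right this.le (by positivity)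
  · exact mul_lt_mul_of_pos_right hi0 (pow_pos (norm_pos_iff.mpr hj0) 2)

lemma arrow_bound_gt {ε : ℝ} (hε : 0 < ε) (t : ℝ)
    (htaa : t + (∑ i, ‖a i‖ ^ 2) / ε ≤ aa)
    (w : EuclideanSpace ℂ (Fin (m+1)))
    (hsupp : ∀ j, j ∉ ((univ.filter fun i => t ≤ d i).image Fin.castSucc
      ∪ {Fin.last m}) → w j = 0)
    (hw0 : w ≠ 0) :
    (t - ε) * ‖w‖ ^ 2 < quad (arrowMatrix m d a aa) w := by
  classical
  have hvan : ∀ i : Fin m, ¬ t ≤ d i → w i.castSucc = 0 := by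
    intro i hi
    refine hsupp _ ?_
    simp only [Finset.mem_union, Finset.mem_image, Finset.mem_filter, Finset.mem_univ, true_and,
      Finset.mem_singleton]
    rintro (⟨i', hi', hcast⟩ | hlast)
    · exact hi (Fin.castSucc_inj.1 hcast ▸ hi')
    · exact (Fin.castSucc_lt_last i).ne hlast
  have hd : ∀ i : Fin m, t * ‖w i.castSucc‖ ^ 2 ≤ d i * ‖w i.castSucc‖ ^ 2 := by
    intro i
    by_cases hwi : w i.castSucc = 0
    · simp [hwi]
    · have : t ≤ d i := by
        by_contra h
        exact hwi (hvan i h)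
      exact mul_le_mul_of_nonneg_right this (by positivity)
  rw [arrow_quad, norm_sq_coords]
  by_cases hn : w (Fin.last m) = 0
  · -- last coordinate zero: pure diagonal estimate
    obtain ⟨j0, hj0⟩ := exists_coord_ne_zero hw0
    have hj0ne : j0 ≠ Fin.last m := fun h => hj0 (h ▸ hn)
    obtain ⟨i0, rfl⟩ := Fin.exists_castSucc_eq.2 hj0ne
    have hpos : 0 < ∑ i : Fin m, ‖w i.castSucc‖ ^ 2 := by
      have h1 : 0 < ‖w i0.castSucc‖ ^ 2 := pow_pos (norm_pos_iff.mpr hj0) 2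
      have h2 : ∀ i ∈ (univ : Finset (Fin m)), (0:ℝ) ≤ ‖w i.castSucc‖ ^ 2 :=
        fun i _ => by positivity
      exact Finset.sum_pos' h2 ⟨i0, Finset.mem_univ i0, h1⟩
    rw [hn]
    simp only [norm_zero, map_zero, zero_mul, mul_zero, Complex.zero_re, add_zero]
    have hz : (0:ℝ) ^ 2 = 0 := by norm_num
    rw [hz, mul_zero, add_zero, add_zero]
    have hsum : t * (∑ i : Fin m, ‖w i.castSucc‖ ^ 2) ≤ ∑ i, d i * ‖w i.castSucc‖ ^ 2 := by
      rw [Finset.mul_sum]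
      exact Finset.sum_le_sum fun i _ => hd i
    nlinarith [hpos]
  · -- last coordinate nonzero
    set S := ∑ i, ‖a i‖ ^ 2 with hS
    have hSnn : 0 ≤ S := Finset.sum_nonneg fun i _ => by positivity
    have htn : 0 < ‖w (Fin.last m)‖ ^ 2 := pow_pos (norm_pos_iff.mpr hn) 2
    have hcross : ∀ i : Fin m,
        -(‖a i‖ ^ 2 / ε * ‖w (Fin.last m)‖ ^ 2 + ε * ‖w i.castSucc‖ ^ 2)
          ≤ 2 * ((starRingEnd ℂ) (w (Fin.last m)) * (starRingEnd ℂ) (a i)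
              * w i.castSucc).re := by
      intro i
      set z := (starRingEnd ℂ) (w (Fin.last m)) * (starRingEnd ℂ) (a i) * w i.castSucc with hz
      have hnz : ‖z‖ = ‖w (Fin.last m)‖ * ‖a i‖ * ‖w i.castSucc‖ := by
        rw [hz, norm_mul, norm_mul, RCLike.norm_conj, RCLike.norm_conj]
      have hre : -(‖w (Fin.last m)‖ * ‖a i‖ * ‖w i.castSucc‖) ≤ z.re := by
        have h1 : |z.re| ≤ ‖z‖ := Complex.abs_re_le_norm z
        rw [hnz] at h1
        have := neg_abs_le z.re
        linarith [abs_nonneg z.re]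
      have key : 2 * (‖w (Fin.last m)‖ * ‖a i‖ * ‖w i.castSucc‖)
          ≤ ‖a i‖ ^ 2 / ε * ‖w (Fin.last m)‖ ^ 2 + ε * ‖w i.castSucc‖ ^ 2 := by
        have expand : ‖a i‖ ^ 2 / ε * ‖w (Fin.last m)‖ ^ 2 + ε * ‖w i.castSucc‖ ^ 2
            - 2 * (‖w (Fin.last m)‖ * ‖a i‖ * ‖w i.castSucc‖)
            = (‖a i‖ * ‖w (Fin.last m)‖ - ε * ‖w i.castSucc‖) ^ 2 / ε := by
          field_simp
          ring
        have hnn : (0:ℝ) ≤ (‖a i‖ * ‖w (Fin.last m)‖ - ε * ‖w i.castSucc‖) ^ 2 / ε :=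
          div_nonneg (sq_nonneg _) hε.le
        linarith
      linarith
    have hterm : ∀ i : Fin m,
        (t - ε) * ‖w i.castSucc‖ ^ 2 - ‖a i‖ ^ 2 / ε * ‖w (Fin.last m)‖ ^ 2
          ≤ d i * ‖w i.castSucc‖ ^ 2
            + 2 * ((starRingEnd ℂ) (w (Fin.last m)) * (starRingEnd ℂ) (a i)
                * w i.castSucc).re := by
      intro i
      have h1 := hd i
      have h2 := hcross i
      nlinarith
    have hsum : (t - ε) * (∑ i : Fin m, ‖w i.castSucc‖ ^ 2) - S / ε * ‖w (Fin.last m)‖ ^ 2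
        ≤ ∑ i : Fin m, (d i * ‖w i.castSucc‖ ^ 2
            + 2 * ((starRingEnd ℂ) (w (Fin.last m)) * (starRingEnd ℂ) (a i)
                * w i.castSucc).re) := by
      have := Finset.sum_le_sum fun i (_ : i ∈ (univ : Finset (Fin m))) => hterm i
      have hls : ∑ i : Fin m, ((t - ε) * ‖w i.castSucc‖ ^ 2
          - ‖a i‖ ^ 2 / ε * ‖w (Fin.last m)‖ ^ 2)
          = (t - ε) * (∑ i : Fin m, ‖w i.castSucc‖ ^ 2) - S / ε * ‖w (Fin.last m)‖ ^ 2 := by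
        rw [Finset.sum_sub_distrib, ← Finset.mul_sum, ← Finset.sum_mul, hS]
        congr 1
        rw [Finset.sum_div]
      linarith
    have hfin : t - ε < aa - S / ε := by
      have : t ≤ aa - S / ε := by linarith
      linarith
    have hlast2 : (t - ε) * ‖w (Fin.last m)‖ ^ 2 < (aa - S / ε) * ‖w (Fin.last m)‖ ^ 2 :=
      mul_lt_mul_of_pos_right hfin htn
    nlinarith [hsum]

lemma arrow_bound_last (w : EuclideanSpace ℂ (Fin (m+1)))
    (hsupp : ∀ j, j ∉ ({Fin.last m} : Finset (Fin (m+1))) → w j = 0) :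
    aa * ‖w‖ ^ 2 ≤ quad (arrowMatrix m d a aa) w := by
  classical
  have hvan : ∀ i : Fin m, w i.castSucc = 0 := by
    intro i
    refine hsupp _ ?_
    simp only [Finset.mem_singleton]
    exact (Fin.castSucc_lt_last i).ne
  rw [arrow_quad, norm_sq_coords]
  have : ∀ i : Fin m, d i * ‖w i.castSucc‖ ^ 2
      + 2 * ((starRingEnd ℂ) (w (Fin.last m)) * (starRingEnd ℂ) (a i) * w i.castSucc).re
      = 0 := by
    intro i
    rw [hvan i]
    simp
  rw [Finset.sum_congr rfl fun i _ => this i]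
  simp only [Finset.sum_const, smul_zero, zero_add, Finset.sum_const_zero]
  have : ∀ i : Fin m, ‖w i.castSucc‖ ^ 2 = 0 := fun i => by rw [hvan i]; simp
  rw [Finset.sum_congr rfl fun i _ => this i]
  simp

end Arrow


section Sorting

lemma card_filter_comp_perm {K : ℕ} (f : Fin K → ℝ) (p : ℝ → Prop) [DecidablePred p]
    (τ : Equiv.Perm (Fin K)) :
    (univ.filter fun k => p (f (τ k))).card = (univ.filter fun j => p (f j)).card := by
  refine Finset.card_bij' (fun k _ => τ k) (fun j _ => τ.symm j) ?_ ?_ ?_ ?_ <;>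
    simp [Finset.mem_filter]

lemma count_lt_le_of_monotone {K : ℕ} {h : Fin K → ℝ} (hm : Monotone h) (k : Fin K) :
    (univ.filter fun j => h j < h k).card ≤ k.val := by
  have hsub : (univ.filter fun j => h j < h k) ⊆ Finset.Iio k := by
    intro j hj
    rw [Finset.mem_Iio]
    by_contra h2
    push_neg at h2
    exact absurd (hm h2) (not_le.mpr (Finset.mem_filter.1 hj).2)
  calc (univ.filter fun j => h j < h k).card ≤ (Finset.Iio k).card :=
        Finset.card_le_card hsub
    _ = k.val := Fin.card_Iio k

lemma lower_of_count {K : ℕ} {h : Fin K → ℝ} (hm : Monotone h) (k : Fin K) (c : ℝ)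
    (hc : K ≤ (univ.filter fun j => c < h j).card + k.val) : c < h k := by
  by_contra hx
  push_neg at hx
  have hsub : (univ.filter fun j => c < h j) ⊆ Finset.Ioi k := by
    intro j hj
    rw [Finset.mem_Ioi]
    by_contra h2
    push_neg at h2
    exact absurd ((hm h2).trans hx) (not_le.mpr (Finset.mem_filter.1 hj).2)
  have hcard : (univ.filter fun j => c < h j).card ≤ K - 1 - k.val :=
    (Finset.card_le_card hsub).trans (le_of_eq (Fin.card_Ioi k))
  have := k.isLt
  omega

end Sorting

end ArrowAux

open ArrowAux Finset

/-- quantitative lemma on eigenvalues of arrow matrices.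
Writing `n = m + 1 ≥ 2`, if the corner entry `𝐚` satisfies the quadratic growth
condition `𝐚 ≥ ((2n−3)/ε) ∑ |a_i|² + (n−1) ∑ |d_i| + (n−2)ε/(2n−3)` then the
eigenvalues of the arrow matrix admit an enumeration `λ_1, …, λ_n` with
`|d_α − λ_α| < ε` for `α ≤ n−1` and `0 ≤ λ_n − 𝐚 < (n−1)ε`. -/
theorem stmt_1 (m : ℕ) (hm : 1 ≤ m) (ε : ℝ) (hε : 0 < ε)
    (d : Fin m → ℝ) (a : Fin m → ℂ) (aa : ℝ)
    (hA : (arrowMatrix m d a aa).IsHermitian)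
    (hgrowth : aa ≥ (2 * (m + 1 : ℝ) - 3) / ε * ∑ i : Fin m, ‖a i‖ ^ 2
        + ((m + 1 : ℝ) - 1) * ∑ i : Fin m, |d i|
        + ((m + 1 : ℝ) - 2) * ε / (2 * (m + 1 : ℝ) - 3)) :
    ∃ σ : Equiv.Perm (Fin (m + 1)),
      (∀ α : Fin m, |d α - hA.eigenvalues (σ α.castSucc)| < ε) ∧
        0 ≤ hA.eigenvalues (σ (Fin.last m)) - aa ∧
          hA.eigenvalues (σ (Fin.last m)) - aa < ((m + 1 : ℝ) - 1) * ε := by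
  classical
  set μ : Fin (m+1) → ℝ := hA.eigenvalues with hμ
  set τ : Equiv.Perm (Fin (m+1)) := Tuple.sort μ with hτ
  set ρ : Equiv.Perm (Fin m) := Tuple.sort d with hρ
  have hM : Monotone (μ ∘ τ) := Tuple.monotone_sort μ
  have hD : Monotone (d ∘ ρ) := Tuple.monotone_sort d
  set S : ℝ := ∑ i : Fin m, ‖a i‖ ^ 2 with hSdef
  have hS0 : 0 ≤ S := Finset.sum_nonneg fun i _ => by positivity
  have hm1 : (1:ℝ) ≤ (m:ℝ) := by exact_mod_cast hm
  -- the growth hypothesis gives `d α + S/ε ≤ aa` for every `α`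
  have hbig : ∀ α : Fin m, d α + S / ε ≤ aa := by
    intro α
    have h1 : S / ε ≤ (2 * (m + 1 : ℝ) - 3) / ε * S := by
      rw [div_mul_eq_mul_div]
      have hnum : S ≤ (2 * (m + 1 : ℝ) - 3) * S := by nlinarith
      exact div_le_div_of_nonneg_right hnum hε.le |>.trans_eq rfl
    have habs : |d α| ≤ ∑ i : Fin m, |d i| :=
      Finset.single_le_sum (fun i _ => abs_nonneg (d i)) (Finset.mem_univ α)
    have hdabs : d α ≤ |d α| := le_abs_self _
    have hsumabs : 0 ≤ ∑ i : Fin m, |d i| := Finset.sum_nonneg fun i _ => abs_nonneg _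
    have h2 : d α ≤ ((m + 1 : ℝ) - 1) * ∑ i : Fin m, |d i| := by nlinarith
    have h3 : 0 ≤ ((m + 1 : ℝ) - 2) * ε / (2 * (m + 1 : ℝ) - 3) := by
      apply div_nonneg
      · nlinarith
      · nlinarith
    linarith
  -- G1 : sorted eigenvalues are below sorted diagonal values
  have G1 : ∀ k : Fin m, μ (τ k.castSucc) ≤ d (ρ k) := by
    intro k
    by_contra hx
    push_neg at hx
    set x : ℝ := μ (τ k.castSucc) with hxdef
    have hcount : ((univ.filter fun i => d i < x).image Fin.castSucc).card
        ≤ (univ.filter fun j => μ j < x).card :=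
      card_le_count_lt hA (fun w hsupp hw0 => arrow_bound_lt d a aa x w hsupp hw0)
    have himg : ((univ.filter fun i => d i < x).image Fin.castSucc).card
        = (univ.filter fun i => d i < x).card :=
      Finset.card_image_of_injective _ (Fin.castSucc_injective m)
    have hsub : (Finset.Iic k).image ρ ⊆ univ.filter fun i => d i < x := by
      intro i hi
      obtain ⟨j, hj, rfl⟩ := Finset.mem_image.1 hi
      rw [Finset.mem_filter]
      refine ⟨Finset.mem_univ _, lt_of_le_of_lt ?_ hx⟩
      exact hD (Finset.mem_Iic.1 hj)
    have hge : k.val + 1 ≤ (univ.filter fun i => d i < x).card := by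
      have h5 : ((Finset.Iic k).image ρ).card = k.val + 1 := by
        rw [Finset.card_image_of_injective _ ρ.injective, Fin.card_Iic]
      exact h5 ▸ Finset.card_le_card hsub
    have htrans : (univ.filter fun j => μ j < x).card
        = (univ.filter fun k' => μ (τ k') < x).card :=
      (card_filter_comp_perm μ (· < x) τ).symm
    have hupper : (univ.filter fun k' => μ (τ k') < x).card ≤ k.val := by
      have := count_lt_le_of_monotone hM k.castSucc
      simpa [Fin.coe_castSucc] using this
    omega
  -- G2 : sorted eigenvalues are above sorted diagonal values minus ε
  have G2 : ∀ k : Fin m, d (ρ k) - ε < μ (τ k.castSucc) := by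
    intro k
    set t : ℝ := d (ρ k) with htdef
    set s : Finset (Fin (m+1)) :=
      (univ.filter fun i => t ≤ d i).image Fin.castSucc ∪ {Fin.last m} with hsdef
    have hlastnot : Fin.last m ∉ (univ.filter fun i => t ≤ d i).image Fin.castSucc := by
      simp only [Finset.mem_image]
      rintro ⟨i, _, hcast⟩
      exact (Fin.castSucc_lt_last i).ne hcast
    have hcards : s.card = (univ.filter fun i => t ≤ d i).card + 1 := by
      rw [hsdef, Finset.card_union_of_disjoint (Finset.disjoint_singleton_right.2 hlastnot),
        Finset.card_image_of_injective _ (Fin.castSucc_injective m), Finset.card_singleton]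
    have hsub : (Finset.Ici k).image ρ ⊆ univ.filter fun i => t ≤ d i := by
      intro i hi
      obtain ⟨j, hj, rfl⟩ := Finset.mem_image.1 hi
      rw [Finset.mem_filter]
      exact ⟨Finset.mem_univ _, hD (Finset.mem_Ici.1 hj)⟩
    have hge : m - k.val ≤ (univ.filter fun i => t ≤ d i).card := by
      have h5 : ((Finset.Ici k).image ρ).card = m - k.val := by
        rw [Finset.card_image_of_injective _ ρ.injective, Fin.card_Ici]
      exact h5 ▸ Finset.card_le_card hsub
    have hcount : s.card ≤ (univ.filter fun j => t - ε < μ j).card :=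
      card_le_count_gt hA (fun w hsupp hw0 =>
        arrow_bound_gt d a aa hε t (hbig (ρ k)) w hsupp hw0)
    have htrans : (univ.filter fun j => t - ε < μ j).card
        = (univ.filter fun k' => t - ε < μ (τ k')).card :=
      (card_filter_comp_perm μ (t - ε < ·) τ).symm
    have := k.isLt
    refine lower_of_count hM k.castSucc (t - ε) ?_
    have hcoe : (k.castSucc : Fin (m+1)).val = k.val := rfl
    have hcomp : (univ.filter fun j => t - ε < (μ ∘ τ) j)
        = (univ.filter fun k' => t - ε < μ (τ k')) := rfl
    rw [hcoe, hcomp]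
    omega
  -- G3 : the top sorted eigenvalue is at least aa
  have G3 : aa ≤ μ (τ (Fin.last m)) := by
    have hcount : ({Fin.last m} : Finset (Fin (m+1))).card
        ≤ (univ.filter fun j => aa ≤ μ j).card :=
      card_le_count_ge hA (fun w hsupp => arrow_bound_last d a aa w hsupp)
    rw [Finset.card_singleton] at hcount
    have hne : (univ.filter fun j => aa ≤ μ j).Nonempty :=
      Finset.card_pos.1 (by omega)
    obtain ⟨j, hj⟩ := hne
    have hjle : aa ≤ μ j := (Finset.mem_filter.1 hj).2
    have : μ j = (μ ∘ τ) (τ.symm j) := by simp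
    rw [this] at hjle
    exact hjle.trans (hM (Fin.le_last _))
  -- trace identity
  have htrace : ∑ j, μ j = (∑ i, d i) + aa := by
    have hdiag : star (hA.eigenvectorUnitary : Matrix (Fin (m+1)) (Fin (m+1)) ℂ)
        * (arrowMatrix m d a aa) * (hA.eigenvectorUnitary : Matrix (Fin (m+1)) (Fin (m+1)) ℂ)
        = Matrix.diagonal (RCLike.ofReal ∘ hA.eigenvalues) := by
      have := hA.conjStarAlgAut_star_eigenvectorUnitary
      rwa [Unitary.conjStarAlgAut_star_apply] at this
    have hUmem := hA.eigenvectorUnitary.2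
    have hUU : (hA.eigenvectorUnitary : Matrix (Fin (m+1)) (Fin (m+1)) ℂ)
        * star (hA.eigenvectorUnitary : Matrix (Fin (m+1)) (Fin (m+1)) ℂ) = 1 :=
      (Unitary.mem_iff.mp hUmem).2
    have h1 : Matrix.trace (star (hA.eigenvectorUnitary : Matrix (Fin (m+1)) (Fin (m+1)) ℂ)
        * (arrowMatrix m d a aa)
        * (hA.eigenvectorUnitary : Matrix (Fin (m+1)) (Fin (m+1)) ℂ))
        = Matrix.trace (arrowMatrix m d a aa) := by
      rw [Matrix.trace_mul_cycle, hUU, Matrix.one_mul]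
    rw [hdiag] at h1
    have h2 : Matrix.trace (Matrix.diagonal (RCLike.ofReal ∘ hA.eigenvalues))
        = ((∑ j, μ j : ℝ) : ℂ) := by
      rw [Matrix.trace_diagonal]
      push_cast
      rfl
    have h3 : Matrix.trace (arrowMatrix m d a aa) = (((∑ i, d i) + aa : ℝ) : ℂ) := by
      have : Matrix.trace (arrowMatrix m d a aa)
          = ∑ j, arrowMatrix m d a aa j j := rfl
      rw [this, Fin.sum_univ_castSucc]
      rw [Finset.sum_congr rfl (fun i _ => by
        rw [arrow_cc d a aa i i, if_pos rfl])]
      rw [arrow_ll]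
      push_cast
      rfl
    rw [h2, h3] at h1
    exact_mod_cast h1
  -- construct the permutation
  set σ : Equiv.Perm (Fin (m+1)) :=
    (Equiv.Perm.viaFintypeEmbedding ρ.symm Fin.castSuccEmb).trans τ with hσ
  have hσcast : ∀ α : Fin m, σ α.castSucc = τ ((ρ.symm α).castSucc) := by
    intro α
    have h1 : Equiv.Perm.viaFintypeEmbedding ρ.symm Fin.castSuccEmb (Fin.castSuccEmb α)
        = Fin.castSuccEmb (ρ.symm α) := Equiv.Perm.viaFintypeEmbedding_apply_image _ _ _
    simp only [hσ, Equiv.trans_apply]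
    rw [show (α.castSucc : Fin (m+1)) = Fin.castSuccEmb α from rfl, h1]
    rfl
  have hσlast : σ (Fin.last m) = τ (Fin.last m) := by
    have hnot : Fin.last m ∉ Set.range (Fin.castSuccEmb : Fin m ↪ Fin (m+1)) := by
      rintro ⟨i, hi⟩
      exact (Fin.castSucc_lt_last i).ne hi
    simp only [hσ, Equiv.trans_apply]
    rw [Equiv.Perm.viaFintypeEmbedding_apply_notMem_range _ _ hnot]
  refine ⟨σ, ?_, ?_, ?_⟩
  · intro α
    rw [hσcast α]
    set k : Fin m := ρ.symm α with hk
    have hρk : ρ k = α := ρ.apply_symm_apply α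
    rw [← hρk]
    rw [abs_lt]
    constructor
    · linarith [G1 k]
    · linarith [G2 k]
  · rw [hσlast]
    linarith [G3]
  · rw [hσlast]
    have hsum1 : ∑ j, μ j = ∑ k, μ (τ k) := (Equiv.sum_comp τ μ).symm
    have hsum2 : ∑ i, d i = ∑ k, d (ρ k) := (Equiv.sum_comp ρ d).symm
    have hsplit : ∑ k, μ (τ k)
        = ∑ k : Fin m, μ (τ k.castSucc) + μ (τ (Fin.last m)) :=
      Fin.sum_univ_castSucc (f := fun k => μ (τ k))
    have hlt : ∑ k : Fin m, (d (ρ k) - μ (τ k.castSucc)) < ∑ k : Fin m, ε := by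
      have hne : (univ : Finset (Fin m)).Nonempty := by
        refine ⟨⟨0, hm⟩, Finset.mem_univ _⟩
      exact Finset.sum_lt_sum_of_nonempty hne fun k _ => by linarith [G2 k]
    rw [Finset.sum_sub_distrib] at hlt
    have hconst : ∑ _k : Fin m, ε = (m : ℝ) * ε := by
      rw [Finset.sum_const, Finset.card_univ, Fintype.card_fin, nsmul_eq_mul]
    rw [hconst] at hlt
    have : μ (τ (Fin.last m)) - aa
        = ∑ k : Fin m, d (ρ k) - ∑ k : Fin m, μ (τ k.castSucc) := by
      have := htrace
      rw [hsum1, hsplit, hsum2] at this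
      linarith
    rw [this]
    have : ((m + 1 : ℝ) - 1) = (m : ℝ) := by ring
    rw [this]
    linarith
end

section
/- Let n ≥ 2 and ε > 0. Given real numbers d_1,…,d_{n−1}, complex numbers a_1,…,a_{n−1}, and a real parameter 𝐚, let A be the n×n Hermitian arrow matrix determined by these data, and let λ_1 ≤ λ_2 ≤ ⋯ ≤ λ_n be the eigenvalues of A listed with multiplicity in increasing order. If 𝐚 ≥ (1/ε) ∑_{i=1}^{n−1} |a_i|² + ∑_{i=1}^{n−1} ( d_i + (n−2)|d_i| ) + (n−2)ε, then there exist indices i_1, …, i_{n−1} ∈ {1, …, n−1} such that |λ_α − d_{i_α}| < ε for every 1 ≤ α ≤ n−1, and moreover 0 ≤ λ_n − 𝐚 < (n−1)ε + | ∑_{α=1}^{n−1} (d_α − d_{i_α}) |. -/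
open Matrix

section auxLemmas

variable {m : ℕ} (d : Fin m → ℝ) (a : Fin m → ℂ) (aa : ℝ)

lemma arrow_cc (i j : Fin m) :
    arrowMatrix m d a aa i.castSucc j.castSucc = if i = j then (d i : ℂ) else 0 := by
  simp [arrowMatrix, (Fin.castSucc_lt_last _).ne, Fin.castSucc_inj]

lemma arrow_cl (i : Fin m) : arrowMatrix m d a aa i.castSucc (Fin.last m) = a i := by
  simp [arrowMatrix, (Fin.castSucc_lt_last _).ne]

lemma arrow_lc (i : Fin m) :
    arrowMatrix m d a aa (Fin.last m) i.castSucc = (starRingEnd ℂ) (a i) := by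
  simp [arrowMatrix, (Fin.castSucc_lt_last _).ne]

lemma arrow_ll : arrowMatrix m d a aa (Fin.last m) (Fin.last m) = (aa : ℂ) := by
  simp [arrowMatrix]

lemma arrow_mulVec_castSucc (v : Fin (m+1) → ℂ) (i : Fin m) :
    (arrowMatrix m d a aa *ᵥ v) i.castSucc
      = (d i : ℂ) * v i.castSucc + a i * v (Fin.last m) := by
  rw [Matrix.mulVec, dotProduct, Fin.sum_univ_castSucc]
  simp only [arrow_cc, arrow_cl, ite_mul, zero_mul]
  rw [Finset.sum_ite_eq (Finset.univ) i (fun j => (d i : ℂ) * v j.castSucc)]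
  simp

lemma arrow_mulVec_last (v : Fin (m+1) → ℂ) :
    (arrowMatrix m d a aa *ᵥ v) (Fin.last m)
      = (∑ i : Fin m, (starRingEnd ℂ) (a i) * v i.castSucc) + (aa : ℂ) * v (Fin.last m) := by
  rw [Matrix.mulVec, dotProduct, Fin.sum_univ_castSucc]
  simp only [arrow_lc, arrow_ll]

lemma arrow_trace : (arrowMatrix m d a aa).trace = (∑ i : Fin m, (d i : ℂ)) + aa := by
  rw [Matrix.trace, Fin.sum_univ_castSucc]
  simp [Matrix.diag, arrow_cc, arrow_ll]

/-- Key dichotomy: any eigenvalue of the arrow matrix is either within `ε` of some `d i`,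
or within `(∑ ‖a i‖²)/ε` of `aa`. -/
lemma key_dichotomy {ε : ℝ} (hε : 0 < ε)
    (μ : ℝ) (v : Fin (m+1) → ℂ) (hv : v ≠ 0)
    (heq : arrowMatrix m d a aa *ᵥ v = μ • v) :
    (∃ i, |μ - d i| < ε) ∨ |μ - aa| ≤ (∑ i : Fin m, ‖a i‖ ^ 2) / ε := by
  by_cases hcase : ∃ i, |μ - d i| < ε
  · exact Or.inl hcase
  push_neg at hcase
  right
  have hrow : ∀ i : Fin m, ((μ : ℂ) - d i) * v i.castSucc = a i * v (Fin.last m) := by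
    intro i
    have h1 := congrFun heq i.castSucc
    rw [arrow_mulVec_castSucc] at h1
    simp only [Pi.smul_apply, Complex.real_smul] at h1
    linear_combination -h1
  have hlastrow : ((μ : ℂ) - aa) * v (Fin.last m)
      = ∑ i : Fin m, (starRingEnd ℂ) (a i) * v i.castSucc := by
    have h1 := congrFun heq (Fin.last m)
    rw [arrow_mulVec_last] at h1
    simp only [Pi.smul_apply, Complex.real_smul] at h1
    linear_combination -h1
  have hdlb : ∀ i : Fin m, ε ≤ ‖(μ : ℂ) - d i‖ := by
    intro i
    have : ((μ : ℂ) - d i) = ((μ - d i : ℝ) : ℂ) := by push_cast; ring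
    rw [this, Complex.norm_real, Real.norm_eq_abs]
    exact hcase i
  have hdne : ∀ i : Fin m, ((μ : ℂ) - d i) ≠ 0 := by
    intro i h
    have := hdlb i
    rw [h, norm_zero] at this
    linarith
  have hvn : v (Fin.last m) ≠ 0 := by
    intro h0
    apply hv
    funext k
    induction k using Fin.lastCases with
    | last => exact h0
    | cast i =>
      have := hrow i
      rw [h0, mul_zero] at this
      exact (mul_eq_zero.mp this).resolve_left (hdne i)
  have hbound : ∀ i : Fin m, ‖v i.castSucc‖ ≤ ‖a i‖ * ‖v (Fin.last m)‖ / ε := by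
    intro i
    have h1 : ‖(μ:ℂ) - d i‖ * ‖v i.castSucc‖ = ‖a i‖ * ‖v (Fin.last m)‖ := by
      rw [← norm_mul, ← norm_mul, hrow i]
    rw [div_eq_inv_mul, ← h1]
    rw [mul_comm ε⁻¹ _]
    rw [mul_comm (‖(μ:ℂ) - d i‖) _]
    rcases eq_or_ne (v i.castSucc) 0 with h | h
    · simp [h]
    · have : (0:ℝ) < ‖v i.castSucc‖ := norm_pos_iff.mpr h
      rw [mul_assoc]
      apply le_mul_of_one_le_right (norm_nonneg _)
      calc (1:ℝ) = ε * ε⁻¹ := (mul_inv_cancel₀ hε.ne').symm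
        _ ≤ ‖(μ:ℂ) - d i‖ * ε⁻¹ := by gcongr; exact hdlb i
  have hvpos : (0:ℝ) < ‖v (Fin.last m)‖ := norm_pos_iff.mpr hvn
  have hmain : |μ - aa| * ‖v (Fin.last m)‖
      ≤ ((∑ i : Fin m, ‖a i‖ ^ 2) / ε) * ‖v (Fin.last m)‖ := by
    have e1 : |μ - aa| * ‖v (Fin.last m)‖ = ‖((μ:ℂ) - aa) * v (Fin.last m)‖ := by
      rw [norm_mul]
      congr 1
      have : ((μ : ℂ) - aa) = ((μ - aa : ℝ) : ℂ) := by push_cast; ring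
      rw [this, Complex.norm_real, Real.norm_eq_abs]
    rw [e1, hlastrow]
    calc ‖∑ i : Fin m, (starRingEnd ℂ) (a i) * v i.castSucc‖
        ≤ ∑ i : Fin m, ‖(starRingEnd ℂ) (a i) * v i.castSucc‖ := norm_sum_le _ _
      _ ≤ ∑ i : Fin m, ‖a i‖ * (‖a i‖ * ‖v (Fin.last m)‖ / ε) := by
          apply Finset.sum_le_sum
          intro i _
          rw [norm_mul, RingHomIsometric.norm_map]
          exact mul_le_mul_of_nonneg_left (hbound i) (norm_nonneg _)
      _ = ((∑ i : Fin m, ‖a i‖ ^ 2) / ε) * ‖v (Fin.last m)‖ := by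
          rw [Finset.sum_div, Finset.sum_mul]
          congr 1
          funext i
          ring
  exact le_of_mul_le_mul_right hmain hvpos

end auxLemmas

section hermLemmas

variable {n : ℕ} (A : Matrix (Fin n) (Fin n) ℂ) (hA : A.IsHermitian)

lemma trace_eq_sum_eig : A.trace = ∑ k, (hA.eigenvalues k : ℂ) := by
  calc A.trace
      = ((hA.eigenvectorUnitary : Matrix (Fin n) (Fin n) ℂ) *
          Matrix.diagonal (RCLike.ofReal ∘ hA.eigenvalues) *
          (star hA.eigenvectorUnitary : Matrix (Fin n) (Fin n) ℂ)).trace := by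
        exact congrArg Matrix.trace hA.spectral_theorem
    _ = (Matrix.diagonal (RCLike.ofReal ∘ hA.eigenvalues)).trace := by
        rw [Matrix.trace_mul_cycle]
        rw [show (star hA.eigenvectorUnitary : Matrix (Fin n) (Fin n) ℂ) *
          (hA.eigenvectorUnitary : Matrix (Fin n) (Fin n) ℂ) = 1 from Unitary.coe_star_mul_self _,
          Matrix.one_mul]
    _ = ∑ k, (hA.eigenvalues k : ℂ) := by
        rw [Matrix.trace_diagonal]; rfl

lemma diag_le_eigen_max (j : Fin n) (M : ℝ) (hM : ∀ k, hA.eigenvalues k ≤ M)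
    (r : ℝ) (hr : A j j = (r : ℂ)) : r ≤ M := by
  set U : Matrix (Fin n) (Fin n) ℂ := (hA.eigenvectorUnitary : Matrix (Fin n) (Fin n) ℂ) with hU
  have hAjj := congrArg (fun B : Matrix (Fin n) (Fin n) ℂ => B j j) hA.spectral_theorem
  simp only [Unitary.conjStarAlgAut_apply, Matrix.mul_apply, Matrix.diagonal_apply, Function.comp_apply, mul_ite, mul_zero,
    ite_mul, zero_mul, Finset.sum_ite_eq, Finset.sum_ite_eq', Finset.mem_univ, if_true,
    Matrix.star_apply, RCLike.star_def, ← hU] at hAjj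
  have hAjj2 : A j j = ∑ k, ((hA.eigenvalues k * Complex.normSq (U j k) : ℝ) : ℂ) := by
    rw [hAjj]
    apply Finset.sum_congr rfl
    intro k _
    push_cast
    rw [mul_comm (U j k) _, mul_assoc, Complex.mul_conj]
    norm_num
  rw [hr, ← Complex.ofReal_sum] at hAjj2
  have hreal : r = ∑ k, hA.eigenvalues k * Complex.normSq (U j k) := by
    exact_mod_cast hAjj2
  have hrownorm : ∑ k, Complex.normSq (U j k) = 1 := by
    have h1 := congrArg (fun B : Matrix (Fin n) (Fin n) ℂ => B j j)
      (Unitary.coe_mul_star_self hA.eigenvectorUnitary)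
    simp only [Matrix.mul_apply, Matrix.star_apply, Matrix.one_apply_eq, RCLike.star_def,
      Unitary.coe_star, ← hU] at h1
    have h2 : ∑ k, ((Complex.normSq (U j k) : ℝ) : ℂ) = 1 := by
      rw [← h1]
      apply Finset.sum_congr rfl
      intro k _
      rw [Complex.mul_conj]
    rw [← Complex.ofReal_sum] at h2
    exact_mod_cast h2
  rw [hreal]
  calc ∑ k, hA.eigenvalues k * Complex.normSq (U j k)
      ≤ ∑ k, M * Complex.normSq (U j k) := by
        apply Finset.sum_le_sum
        intro k _
        exact mul_le_mul_of_nonneg_right (hM k) (Complex.normSq_nonneg _)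
    _ = M := by rw [← Finset.mul_sum, hrownorm, mul_one]

end hermLemmas

/-- counting lemma. Writing `n = m + 1 ≥ 2`, let
`λ_1 ≤ ⋯ ≤ λ_n` be the eigenvalues of the arrow matrix in increasing order.
If `𝐚 ≥ (1/ε) ∑ |a_i|² + ∑ (d_i + (n−2)|d_i|) + (n−2)ε`, then there are indices
`i_1, …, i_{n−1}` with `|λ_α − d_{i_α}| < ε` for each `α ≤ n−1`, and
`0 ≤ λ_n − 𝐚 < (n−1)ε + |∑_α (d_α − d_{i_α})|`. -/
theorem stmt_2 (m : ℕ) (hm : 1 ≤ m) (ε : ℝ) (hε : 0 < ε)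
    (d : Fin m → ℝ) (a : Fin m → ℂ) (aa : ℝ)
    (hA : (arrowMatrix m d a aa).IsHermitian)
    (lam : Fin (m + 1) → ℝ) (e : Equiv.Perm (Fin (m + 1)))
    (hlam : lam = hA.eigenvalues ∘ e) (hmono : Monotone lam)
    (hgrowth : aa ≥ (1 / ε) * ∑ i : Fin m, ‖a i‖ ^ 2
        + ∑ i : Fin m, (d i + ((m + 1 : ℝ) - 2) * |d i|)
        + ((m + 1 : ℝ) - 2) * ε) :
    ∃ idx : Fin m → Fin m,
      (∀ α : Fin m, |lam α.castSucc - d (idx α)| < ε) ∧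
        0 ≤ lam (Fin.last m) - aa ∧
          lam (Fin.last m) - aa
            < ((m + 1 : ℝ) - 1) * ε + |∑ α : Fin m, (d α - d (idx α))| := by
  have hc0 : (0:ℝ) ≤ (m:ℝ) - 1 := by
    have : (1:ℝ) ≤ (m:ℝ) := by exact_mod_cast hm
    linarith
  have hS0 : (0:ℝ) ≤ ∑ i : Fin m, ‖a i‖ ^ 2 :=
    Finset.sum_nonneg fun i _ => sq_nonneg _
  -- rewrite growth hypothesis
  have hgrowth' : aa ≥ (∑ i : Fin m, ‖a i‖ ^ 2) / ε + (∑ i : Fin m, d i)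
      + ((m:ℝ) - 1) * (∑ i : Fin m, |d i|) + ((m:ℝ) - 1) * ε := by
    have h1 : ((m + 1 : ℝ) - 2) = (m:ℝ) - 1 := by ring
    have h2 : ∑ i : Fin m, (d i + ((m + 1 : ℝ) - 2) * |d i|)
        = (∑ i : Fin m, d i) + ((m:ℝ) - 1) * (∑ i : Fin m, |d i|) := by
      rw [Finset.sum_add_distrib, ← Finset.mul_sum, h1]
    have h3 : (1 / ε) * ∑ i : Fin m, ‖a i‖ ^ 2 = (∑ i : Fin m, ‖a i‖ ^ 2) / ε := by
      ring
    rw [h3, h2, h1] at hgrowth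
    linarith
  -- dichotomy for each entry of `lam`
  have hdich : ∀ β : Fin (m+1), (∃ i, |lam β - d i| < ε)
      ∨ |lam β - aa| ≤ (∑ i : Fin m, ‖a i‖ ^ 2) / ε := by
    intro β
    have hvne : (⇑(hA.eigenvectorBasis (e β)) : Fin (m+1) → ℂ) ≠ 0 := by
      have h1 := hA.eigenvectorBasis.toBasis.ne_zero (e β)
      rw [OrthonormalBasis.coe_toBasis] at h1
      intro h
      apply h1
      ext k
      exact congrFun h k
    refine key_dichotomy d a aa hε (lam β) _ hvne ?_
    have hmv := hA.mulVec_eigenvectorBasis (e β)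
    rw [hlam]
    simpa using hmv
  -- the top eigenvalue dominates aa
  have hMle : ∀ k, hA.eigenvalues k ≤ lam (Fin.last m) := by
    intro k
    have h1 : hA.eigenvalues k = lam (e.symm k) := by
      rw [hlam]; simp
    rw [h1]
    exact hmono (Fin.le_last _)
  have hray : aa ≤ lam (Fin.last m) :=
    diag_le_eigen_max _ hA (Fin.last m) _ hMle aa (arrow_ll d a aa)
  -- trace identity
  have htr : ∑ β, lam β = (∑ i : Fin m, d i) + aa := by
    have h1 := trace_eq_sum_eig _ hA
    rw [arrow_trace] at h1
    have h2 : (∑ i : Fin m, d i) + aa = ∑ k, hA.eigenvalues k := by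
      have : (((∑ i : Fin m, d i) + aa : ℝ) : ℂ) = ((∑ k, hA.eigenvalues k : ℝ) : ℂ) := by
        push_cast
        exact h1
      exact_mod_cast this
    rw [hlam, h2]
    exact Fintype.sum_equiv e _ _ fun β => rfl
  -- the localization of the first m eigenvalues
  have hloc : ∀ α : Fin m, ∃ i, |lam α.castSucc - d i| < ε := by
    intro α
    by_contra hno
    push_neg at hno
    have hμR : |lam α.castSucc - aa| ≤ (∑ i : Fin m, ‖a i‖ ^ 2) / ε := by
      rcases hdich α.castSucc with ⟨i, hi⟩ | h2
      · exact absurd hi (not_lt.mpr (hno i))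
      · exact h2
    have hμlb : aa - (∑ i : Fin m, ‖a i‖ ^ 2) / ε ≤ lam α.castSucc := by
      have := (abs_le.mp hμR).1
      linarith
    -- every d j + (m-1)ε is below aa - S/ε
    have hG1 : ∀ j : Fin m, d j + ((m:ℝ) - 1) * ε ≤ aa - (∑ i : Fin m, ‖a i‖ ^ 2) / ε := by
      intro j
      have hterm : ∀ i : Fin m, i ≠ j → 0 ≤ d i + ((m:ℝ) - 1) * |d i| := by
        intro i hij
        have hnt : Nontrivial (Fin m) := ⟨⟨i, j, hij⟩⟩
        have h2m : 2 ≤ m := by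
          have := Fintype.one_lt_card (α := Fin m)
          simp at this; omega
        have hc1 : (1:ℝ) ≤ (m:ℝ) - 1 := by
          have : (2:ℝ) ≤ (m:ℝ) := by exact_mod_cast h2m
          linarith
        nlinarith [abs_nonneg (d i), neg_abs_le (d i)]
      have hsum : d j ≤ (∑ i : Fin m, d i) + ((m:ℝ) - 1) * (∑ i : Fin m, |d i|) := by
        have hdecomp := Finset.add_sum_erase Finset.univ
          (fun i => d i + ((m:ℝ) - 1) * |d i|) (Finset.mem_univ j)
        beta_reduce at hdecomp
        have h2 : (0:ℝ) ≤ ∑ i ∈ Finset.univ.erase j, (d i + ((m:ℝ) - 1) * |d i|) :=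
          Finset.sum_nonneg fun i hi => hterm i (Finset.ne_of_mem_erase hi)
        have h3 : (0:ℝ) ≤ ((m:ℝ) - 1) * |d j| := mul_nonneg hc0 (abs_nonneg _)
        have h4 : ∑ i : Fin m, (d i + ((m:ℝ) - 1) * |d i|)
            = (∑ i : Fin m, d i) + ((m:ℝ) - 1) * (∑ i : Fin m, |d i|) := by
          rw [Finset.sum_add_distrib, ← Finset.mul_sum]
        rw [h4] at hdecomp
        linarith
      linarith
    -- uniform lower bound on all eigenvalues
    have hlb : ∀ β : Fin (m+1), -(∑ i : Fin m, |d i|) - ε < lam β := by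
      intro β
      have habs : ∀ i : Fin m, |d i| ≤ ∑ i : Fin m, |d i| := fun i =>
        Finset.single_le_sum (fun i _ => abs_nonneg (d i)) (Finset.mem_univ i)
      rcases hdich β with ⟨i, hi⟩ | hR2
      · have h1 := (abs_lt.mp hi).1
        have h2 := neg_abs_le (d i)
        have h3 := habs i
        linarith
      · have h1 : aa - (∑ i : Fin m, ‖a i‖ ^ 2) / ε ≤ lam β := by
          have := (abs_le.mp hR2).1
          linarith
        have h2 := hG1 α
        have h3 := neg_abs_le (d α)
        have h4 := habs α
        have h5 : 0 ≤ ((m:ℝ) - 1) * ε := mul_nonneg hc0 hε.le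
        linarith
    -- refined lower bound for lam α.castSucc
    have hμd : ∀ i : Fin m, d i + ε ≤ lam α.castSucc := by
      intro i
      have h1 : d i ≤ lam α.castSucc := by
        have := hG1 i
        have h5 : 0 ≤ ((m:ℝ) - 1) * ε := mul_nonneg hc0 hε.le
        linarith
      have h2 := hno i
      rw [abs_of_nonneg (by linarith)] at h2
      linarith
    rcases eq_or_lt_of_le hm with hm1 | hm2
    · -- m = 1
      subst hm1
      have hα : α = 0 := Subsingleton.elim α 0
      have h0 : α.castSucc = (0 : Fin 2) := by rw [hα]; rfl
      have hl : Fin.last 1 = (1 : Fin 2) := rfl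
      have ht2 : lam 0 + lam 1 = d 0 + aa := by
        have := htr
        rwa [Fin.sum_univ_two, Fin.sum_univ_one] at this
      have h1 := hμd 0
      rw [h0] at h1
      rw [hl] at hray
      linarith
    · -- 2 ≤ m
      have hmem1 : α.castSucc ∈ Finset.univ.erase (Fin.last m) :=
        Finset.mem_erase.mpr ⟨(Fin.castSucc_lt_last α).ne, Finset.mem_univ _⟩
      have hdecomp : ∑ β, lam β = lam (Fin.last m)
          + (lam α.castSucc + ∑ β ∈ (Finset.univ.erase (Fin.last m)).erase α.castSucc, lam β) := by
        rw [← Finset.add_sum_erase _ lam (Finset.mem_univ (Fin.last m)),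
            ← Finset.add_sum_erase _ lam hmem1]
      have hcard : ((Finset.univ.erase (Fin.last m)).erase α.castSucc).card = m - 1 := by
        rw [Finset.card_erase_of_mem hmem1, Finset.card_erase_of_mem (Finset.mem_univ _),
          Finset.card_univ, Fintype.card_fin]
        omega
      have hsne : ((Finset.univ.erase (Fin.last m)).erase α.castSucc).Nonempty := by
        rw [← Finset.card_pos, hcard]
        omega
      have hsum_s : ((m:ℝ) - 1) * (-(∑ i : Fin m, |d i|) - ε)
          < ∑ β ∈ (Finset.univ.erase (Fin.last m)).erase α.castSucc, lam β := by
        have h1 := Finset.sum_lt_sum_of_nonempty hsne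
          (f := fun _ => -(∑ i : Fin m, |d i|) - ε) (fun β _ => hlb β)
        rw [Finset.sum_const, hcard, nsmul_eq_mul, Nat.cast_sub hm, Nat.cast_one] at h1
        exact h1
      rw [hdecomp] at htr
      linarith [hμlb, hray, hgrowth', hsum_s]
  -- choose the indices
  refine ⟨fun α => (hloc α).choose, fun α => (hloc α).choose_spec, by linarith, ?_⟩
  have hsplit : ∑ β, lam β = (∑ α : Fin m, lam α.castSucc) + lam (Fin.last m) :=
    Fin.sum_univ_castSucc lam
  have heq2 : lam (Fin.last m) - aa = ∑ α : Fin m, (d α - lam α.castSucc) := by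
    rw [Finset.sum_sub_distrib]
    rw [hsplit] at htr
    linarith
  have hstep : lam (Fin.last m) - aa
      = (∑ α : Fin m, (d α - d ((hloc α).choose)))
        + ∑ α : Fin m, (d ((hloc α).choose) - lam α.castSucc) := by
    rw [← Finset.sum_add_distrib, heq2]
    apply Finset.sum_congr rfl
    intro α _
    ring
  have hlt : ∑ α : Fin m, (d ((hloc α).choose) - lam α.castSucc) < (m:ℝ) * ε := by
    haveI : Nonempty (Fin m) := Fin.pos_iff_nonempty.mp hm
    have huniv : (Finset.univ : Finset (Fin m)).Nonempty := Finset.univ_nonempty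
    have h1 := Finset.sum_lt_sum_of_nonempty huniv (f := fun α : Fin m => d ((hloc α).choose) - lam α.castSucc)
      (g := fun _ => ε) (fun α _ => by
        have h2 := (abs_lt.mp (hloc α).choose_spec).1
        show d ((hloc α).choose) - lam α.castSucc < ε
        linarith)
    rwa [Finset.sum_const, Finset.card_univ, Fintype.card_fin, nsmul_eq_mul] at h1
  have habs2 : (∑ α : Fin m, (d α - d ((hloc α).choose)))
      ≤ |∑ α : Fin m, (d α - d ((hloc α).choose))| := le_abs_self _
  have hfin : ((m + 1 : ℝ) - 1) = (m:ℝ) := by ring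
  rw [hfin]
  linarith [hstep, hlt, habs2]
end

section
/- Let ε > 0, let d_1 ∈ ℝ, a_1 ∈ ℂ, and 𝐚 ∈ ℝ, and let A be the 2×2 Hermitian matrix with entries A_{11} = d_1, A_{12} = a_1, A_{21} = conj(a_1), A_{22} = 𝐚. Let λ_1 ≤ λ_2 be the two (real) eigenvalues of A. If 𝐚 ≥ |a_1|²/ε + d_1, then 0 ≤ d_1 − λ_1 = λ_2 − 𝐚 < ε. -/
/-- the `2 × 2` case of the quantitative lemma. For the Hermitian
matrix `A = !![d₁, a₁; conj a₁, 𝐚]` with eigenvalues `λ₁ ≤ λ₂`, if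
`𝐚 ≥ |a₁|²/ε + d₁` then `0 ≤ d₁ − λ₁ = λ₂ − 𝐚 < ε`. -/
theorem stmt_3 (ε : ℝ) (hε : 0 < ε) (d₁ : ℝ) (a₁ : ℂ) (aa : ℝ)
    (hA : (!![(d₁ : ℂ), a₁; (starRingEnd ℂ) a₁, (aa : ℂ)] :
      Matrix (Fin 2) (Fin 2) ℂ).IsHermitian)
    (lam : Fin 2 → ℝ) (e : Equiv.Perm (Fin 2))
    (hlam : lam = hA.eigenvalues ∘ e) (hmono : Monotone lam)
    (hgrowth : aa ≥ ‖a₁‖ ^ 2 / ε + d₁) :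
    0 ≤ d₁ - lam 0 ∧ d₁ - lam 0 = lam 1 - aa ∧ lam 1 - aa < ε := by
  set A : Matrix (Fin 2) (Fin 2) ℂ := !![(d₁ : ℂ), a₁; (starRingEnd ℂ) a₁, (aa : ℂ)] with hAdef
  -- trace = sum of eigenvalues
  have htrace : A.trace = ∑ i, (hA.eigenvalues i : ℂ) := by
    conv_lhs => rw [hA.spectral_theorem, Unitary.conjStarAlgAut_apply]
    rw [Matrix.trace_mul_cycle]
    rw [show (star (hA.eigenvectorUnitary : Matrix (Fin 2) (Fin 2) ℂ)) *
        (hA.eigenvectorUnitary : Matrix (Fin 2) (Fin 2) ℂ) = 1 from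
      Unitary.coe_star_mul_self hA.eigenvectorUnitary, one_mul,
      Matrix.trace_diagonal]
    rfl
  have hdet : A.det = ∏ i, (hA.eigenvalues i : ℂ) := hA.det_eq_prod_eigenvalues
  have hsum_lam : ∑ i, lam i = ∑ i, hA.eigenvalues i := by
    rw [hlam]; exact Equiv.sum_comp e hA.eigenvalues
  have hprod_lam : ∏ i, lam i = ∏ i, hA.eigenvalues i := by
    rw [hlam]; exact Equiv.prod_comp e hA.eigenvalues
  -- compute trace and det explicitly
  have htr2 : ((lam 0 + lam 1 : ℝ) : ℂ) = ((d₁ + aa : ℝ) : ℂ) := by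
    have h1 : A.trace = ((d₁ : ℂ)) + (aa : ℂ) := by
      simp [hAdef, Matrix.trace_fin_two]
    rw [h1] at htrace
    have hs : lam 0 + lam 1 = hA.eigenvalues 0 + hA.eigenvalues 1 := by
      simpa [Fin.sum_univ_two] using hsum_lam
    rw [Fin.sum_univ_two] at htrace
    rw [hs]; push_cast; rw [htrace]
  have hdet2 : ((lam 0 * lam 1 : ℝ) : ℂ) = ((d₁ * aa - ‖a₁‖ ^ 2 : ℝ) : ℂ) := by
    have h1 : A.det = (d₁ : ℂ) * (aa : ℂ) - a₁ * (starRingEnd ℂ) a₁ := by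
      simp [hAdef, Matrix.det_fin_two]
    have h2 : a₁ * (starRingEnd ℂ) a₁ = ((‖a₁‖ ^ 2 : ℝ) : ℂ) := by
      simp [Complex.mul_conj, Complex.normSq_eq_norm_sq]
    rw [h1, h2] at hdet
    have hp : lam 0 * lam 1 = hA.eigenvalues 0 * hA.eigenvalues 1 := by
      simpa [Fin.prod_univ_two] using hprod_lam
    rw [Fin.prod_univ_two] at hdet
    rw [hp]; push_cast; rw [← hdet]; push_cast; ring
  have htr : lam 0 + lam 1 = d₁ + aa := by exact_mod_cast htr2
  have hdt : lam 0 * lam 1 = d₁ * aa - ‖a₁‖ ^ 2 := by exact_mod_cast hdet2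
  -- now pure real algebra
  have hle : lam 0 ≤ lam 1 := hmono (by norm_num : (0 : Fin 2) ≤ 1)
  have hr : (0 : ℝ) ≤ ‖a₁‖ ^ 2 := by positivity
  set x := d₁ - lam 0 with hx
  have heq : d₁ - lam 0 = lam 1 - aa := by linarith
  have hl0 : lam 0 = d₁ - x := by rw [hx]; ring
  have hl1 : lam 1 = aa + x := by rw [hx]; linarith
  have hquad : x ^ 2 + (aa - d₁) * x = ‖a₁‖ ^ 2 := by
    rw [hl0, hl1] at hdt
    linear_combination -hdt
  have hs : ‖a₁‖ ^ 2 / ε ≤ aa - d₁ := by linarith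
  have hs0 : 0 ≤ aa - d₁ := le_trans (by positivity) hs
  have hxpos : 0 ≤ x := by
    by_contra h
    push_neg at h
    have h2 : aa - d₁ ≥ -2 * x := by
      have : d₁ - x ≤ aa + x := by
        have : lam 1 = aa + x := by rw [hx]; linarith
        rw [hx] at *; linarith
      linarith
    nlinarith
  have hxlt : x < ε := by
    by_contra h
    push_neg at h
    have : ‖a₁‖ ^ 2 ≤ (aa - d₁) * ε := by
      calc ‖a₁‖ ^ 2 = (‖a₁‖ ^ 2 / ε) * ε := by field_simp
        _ ≤ (aa - d₁) * ε := by nlinarith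
    nlinarith
  exact ⟨hxpos, heq, heq ▸ hxlt⟩
end

section
/- Let n ≥ 1, let Θ be an n×n complex Hermitian matrix with eigenvalues λ_1 ≤ λ_2 ≤ ⋯ ≤ λ_n listed with multiplicity in increasing order, let μ_1 ≥ μ_2 ≥ ⋯ ≥ μ_n be real numbers, and let T_1, …, T_n be an orthonormal basis of ℂⁿ with respect to the standard Hermitian inner product ⟨·,·⟩. Then ∑_{i=1}^n μ_i λ_i ≤ ∑_{i=1}^n μ_i ⟨Θ T_i, T_i⟩ (each ⟨Θ T_i, T_i⟩ being real since Θ is Hermitian). -/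
open Matrix Finset

lemma sum_range_if_lt' {f : ℕ → ℝ} {n k : ℕ} (hk : k ≤ n) :
    ∑ i ∈ range n, (if i < k then f i else 0) = ∑ i ∈ range k, f i := by
  rw [← Finset.sum_filter]
  congr 1
  ext x
  simp only [Finset.mem_filter, Finset.mem_range]
  omega

/-- A real inequality: if `C` is a doubly stochastic `n × n` array, `L` is a
monotone rearrangement of `A` on `[0,n)`, and `U` is antitone on `[0,n)`, then
`∑ U i * L i ≤ ∑ U i * ∑ A j * C i j`. -/
lemma core_ineq' (n : ℕ) (A L U : ℕ → ℝ) (C : ℕ → ℕ → ℝ)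
    (hmono : ∀ i j, i ≤ j → j < n → L i ≤ L j)
    (hanti : ∀ i j, i ≤ j → j < n → U j ≤ U i)
    (hC0 : ∀ i j, 0 ≤ C i j)
    (hrow : ∀ i, i < n → ∑ j ∈ range n, C i j = 1)
    (hcol : ∀ j, j < n → ∑ i ∈ range n, C i j = 1)
    (hperm : ∀ F : ℝ → ℝ, ∑ j ∈ range n, F (A j) = ∑ i ∈ range n, F (L i)) :
    ∑ i ∈ range n, U i * L i ≤ ∑ i ∈ range n, U i * ∑ j ∈ range n, A j * C i j := by
  set D : ℕ → ℝ := fun i => (∑ j ∈ range n, A j * C i j) - L i with hD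
  have hswap : ∀ k, ∑ i ∈ range k, ∑ j ∈ range n, A j * C i j
      = ∑ j ∈ range n, A j * ∑ i ∈ range k, C i j := by
    intro k
    rw [Finset.sum_comm]
    simp_rw [Finset.mul_sum]
  have hSn : ∑ i ∈ range n, D i = 0 := by
    simp only [hD, Finset.sum_sub_distrib]
    rw [hswap n]
    have h1 : ∑ j ∈ range n, A j * ∑ i ∈ range n, C i j = ∑ j ∈ range n, A j := by
      apply Finset.sum_congr rfl
      intro j hj
      rw [hcol j (Finset.mem_range.mp hj), mul_one]
    rw [h1, hperm (fun x => x)]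
    ring
  have hS : ∀ k, k ≤ n → 0 ≤ ∑ i ∈ range k, D i := by
    intro k hk
    rcases eq_or_lt_of_le hk with rfl | hk'
    · rw [hSn]
    set t := L k with ht
    set g : ℕ → ℝ := fun j => ∑ i ∈ range k, C i j with hg
    have hg0 : ∀ j, 0 ≤ g j := fun j => Finset.sum_nonneg fun i _ => hC0 i j
    have hg1 : ∀ j, j < n → g j ≤ 1 := by
      intro j hj
      rw [← hcol j hj]
      exact Finset.sum_le_sum_of_subset_of_nonneg (Finset.range_subset_range.mpr hk)
        (fun i _ _ => hC0 i j)
    have hgs : ∑ j ∈ range n, g j = (k : ℝ) := by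
      rw [hg]
      rw [Finset.sum_comm]
      have : ∀ i ∈ range k, ∑ j ∈ range n, C i j = 1 := fun i hi =>
        hrow i (lt_of_lt_of_le (Finset.mem_range.mp hi) hk)
      rw [Finset.sum_congr rfl this]
      simp
    have key : ∑ j ∈ range n, (A j - t) * g j ≥ ∑ j ∈ range n, min (A j - t) 0 := by
      apply Finset.sum_le_sum
      intro j hj
      rcases le_or_gt t (A j) with h | h
      · have : min (A j - t) 0 ≤ 0 := min_le_right _ _
        linarith [mul_nonneg (show (0:ℝ) ≤ A j - t by linarith) (hg0 j)]
      · have h1 : min (A j - t) 0 = A j - t := min_eq_left (by linarith)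
        rw [h1]
        have := hg1 j (Finset.mem_range.mp hj)
        nlinarith [hg0 j]
    have hmin : ∑ j ∈ range n, min (A j - t) 0 = ∑ i ∈ range n, min (L i - t) 0 :=
      hperm (fun x => min (x - t) 0)
    have hmin2 : ∑ i ∈ range n, min (L i - t) 0
        = ∑ i ∈ range n, (if i < k then L i - t else 0) := by
      apply Finset.sum_congr rfl
      intro i hi
      rcases lt_or_ge i k with h | h
      · rw [if_pos h]
        exact min_eq_left (by linarith [hmono i k (le_of_lt h) hk'])
      · rw [if_neg (not_lt.mpr h)]
        exact min_eq_right (by linarith [hmono k i h (Finset.mem_range.mp hi)])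
    rw [hmin, hmin2, sum_range_if_lt' hk] at key
    have expand : ∑ j ∈ range n, (A j - t) * g j
        = (∑ j ∈ range n, A j * g j) - t * (k : ℝ) := by
      simp_rw [sub_mul, Finset.sum_sub_distrib, ← Finset.mul_sum, hgs]
    have expand2 : ∑ i ∈ range k, (L i - t) = (∑ i ∈ range k, L i) - t * (k : ℝ) := by
      rw [Finset.sum_sub_distrib]
      simp [mul_comm]
    rw [expand, expand2] at key
    simp only [hD, Finset.sum_sub_distrib]
    rw [hswap k]
    linarith
  have habel : (0:ℝ) ≤ ∑ i ∈ range n, U i * D i := by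
    have := Finset.sum_range_by_parts U D n
    simp only [smul_eq_mul] at this
    rw [this, hSn, mul_zero, zero_sub, le_neg, neg_zero]
    apply Finset.sum_nonpos
    intro i hi
    have hi' := Finset.mem_range.mp hi
    have h1 : U (i + 1) - U i ≤ 0 := by
      have := hanti i (i + 1) (Nat.le_succ i) (by omega)
      linarith
    have h2 : 0 ≤ ∑ j ∈ range (i + 1), D j := hS (i + 1) (by omega)
    exact mul_nonpos_of_nonpos_of_nonneg h1 h2
  have : ∑ i ∈ range n, U i * D i
      = (∑ i ∈ range n, U i * ∑ j ∈ range n, A j * C i j) - ∑ i ∈ range n, U i * L i := by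
    simp only [hD, mul_sub, Finset.sum_sub_distrib]
  linarith

/-- a weighted trace inequality, after Marcus / CNS Lemma 6.2.
Let `Θ` be an `n × n` Hermitian matrix with eigenvalues `λ_1 ≤ ⋯ ≤ λ_n` listed with
multiplicity in increasing order, let `μ_1 ≥ ⋯ ≥ μ_n` be reals, and let
`T_1, …, T_n` be an orthonormal basis of `ℂⁿ` for the standard Hermitian inner
product. Then `∑ μ_i λ_i ≤ ∑ μ_i ⟨Θ T_i, T_i⟩`. -/
theorem stmt_4 (n : ℕ) (hn : 1 ≤ n) (Θ : Matrix (Fin n) (Fin n) ℂ)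
    (hΘ : Θ.IsHermitian)
    (lam : Fin n → ℝ) (e : Equiv.Perm (Fin n))
    (hlam : lam = hΘ.eigenvalues ∘ e) (hmono : Monotone lam)
    (μ : Fin n → ℝ) (hμ : Antitone μ)
    (T : Fin n → (Fin n → ℂ))
    (hT : ∀ i j : Fin n, star (T i) ⬝ᵥ T j = if i = j then 1 else 0) :
    ∑ i : Fin n, μ i * lam i ≤ ∑ i : Fin n, μ i * (star (T i) ⬝ᵥ Θ.mulVec (T i)).re := by
  set V : Matrix (Fin n) (Fin n) ℂ := (hΘ.eigenvectorUnitary : Matrix (Fin n) (Fin n) ℂ) with hV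
  have hV2 : V * star V = 1 := (Matrix.mem_unitaryGroup_iff).mp hΘ.eigenvectorUnitary.2
  set m : Fin n → Fin n → ℂ := fun i => star V *ᵥ T i with hm
  have hstar : ∀ i : Fin n, star (m i) = star (T i) ᵥ* V := by
    intro i
    rw [hm, star_mulVec, ← Matrix.star_eq_conjTranspose, star_star]
  have hdot : ∀ i i' : Fin n, star (m i) ⬝ᵥ m i' = if i = i' then 1 else 0 := by
    intro i i'
    rw [hstar, hm, ← dotProduct_mulVec, mulVec_mulVec, hV2, one_mulVec, hT]
  have hcs : ∀ (z : ℂ), star z * z = (Complex.normSq z : ℂ) := by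
    intro z
    rw [Complex.star_def, mul_comm, Complex.mul_conj]
  -- row sums of the doubly stochastic array
  have hrow : ∀ i : Fin n, ∑ j, Complex.normSq (m i j) = 1 := by
    intro i
    have h := hdot i i
    rw [if_pos rfl] at h
    have h2 : ∑ j, (Complex.normSq (m i j) : ℂ) = 1 := by
      rw [← h]
      simp only [dotProduct, Pi.star_apply, hcs]
    have := congrArg Complex.re h2
    simpa using this
  -- column sums
  have hMcol : (Matrix.of m)ᴴ * Matrix.of m = 1 := by
    rw [mul_eq_one_comm]
    ext i i'
    simp only [Matrix.mul_apply, Matrix.conjTranspose_apply, Matrix.of_apply, Matrix.one_apply]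
    have h := hdot i' i
    simp only [dotProduct, Pi.star_apply] at h
    calc ∑ x, m i x * star (m i' x) = ∑ x, star (m i' x) * m i x := by
          apply Finset.sum_congr rfl; intro x _; ring
      _ = if i' = i then 1 else 0 := h
      _ = if i = i' then 1 else 0 := by
          by_cases hh : i = i'
          · simp [hh]
          · rw [if_neg hh, if_neg (fun hhh => hh hhh.symm)]
  have hcol : ∀ j : Fin n, ∑ i, Complex.normSq (m i j) = 1 := by
    intro j
    have h := congrFun (congrFun hMcol j) j
    simp only [Matrix.mul_apply, Matrix.conjTranspose_apply, Matrix.of_apply,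
      Matrix.one_apply_eq] at h
    have h2 : ∑ i, (Complex.normSq (m i j) : ℂ) = 1 := by
      rw [← h]
      simp only [hcs]
    have := congrArg Complex.re h2
    simpa using this
  -- quadratic form via spectral theorem
  have hq : ∀ i : Fin n, (star (T i) ⬝ᵥ Θ.mulVec (T i)).re
      = ∑ j, hΘ.eigenvalues j * Complex.normSq (m i j) := by
    intro i
    have hmi : star V *ᵥ T i = m i := rfl
    have key : star (T i) ⬝ᵥ Θ.mulVec (T i)
        = ∑ j, (hΘ.eigenvalues j : ℂ) * Complex.normSq (m i j) := by
      conv_lhs => rw [hΘ.spectral_theorem, Unitary.conjStarAlgAut_apply]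
      rw [← hV, ← mulVec_mulVec, ← mulVec_mulVec, dotProduct_mulVec, ← hstar, hmi]
      simp only [dotProduct, mulVec_diagonal, Pi.star_apply, Function.comp_apply]
      apply Finset.sum_congr rfl
      intro j _
      rw [show star (m i j) * (RCLike.ofReal (hΘ.eigenvalues j) * m i j)
          = RCLike.ofReal (hΘ.eigenvalues j) * (star (m i j) * m i j) by ring, hcs]
      norm_num
    rw [key]
    simp
  -- set up ℕ-indexed data and apply the core inequality
  set A : ℕ → ℝ := fun j => if h : j < n then hΘ.eigenvalues ⟨j, h⟩ else 0 with hA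
  set L : ℕ → ℝ := fun i => if h : i < n then lam ⟨i, h⟩ else 0 with hL
  set U : ℕ → ℝ := fun i => if h : i < n then μ ⟨i, h⟩ else 0 with hU
  set C : ℕ → ℕ → ℝ := fun i j =>
    if h : i < n then if h' : j < n then Complex.normSq (m ⟨i, h⟩ ⟨j, h'⟩) else 0 else 0 with hC
  have hmono' : ∀ i j, i ≤ j → j < n → L i ≤ L j := by
    intro i j hij hj
    have hi : i < n := lt_of_le_of_lt hij hj
    simp only [hL, dif_pos hi, dif_pos hj]
    exact hmono (show (⟨i, hi⟩ : Fin n) ≤ ⟨j, hj⟩ from hij)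
  have hanti' : ∀ i j, i ≤ j → j < n → U j ≤ U i := by
    intro i j hij hj
    have hi : i < n := lt_of_le_of_lt hij hj
    simp only [hU, dif_pos hi, dif_pos hj]
    exact hμ (show (⟨i, hi⟩ : Fin n) ≤ ⟨j, hj⟩ from hij)
  have hC0 : ∀ i j, 0 ≤ C i j := by
    intro i j
    simp only [hC]
    split
    · split
      · exact Complex.normSq_nonneg _
      · exact le_refl 0
    · exact le_refl 0
  have hrow' : ∀ i, i < n → ∑ j ∈ range n, C i j = 1 := by
    intro i hi
    rw [← Fin.sum_univ_eq_sum_range (fun j => C i j) n]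
    rw [← hrow ⟨i, hi⟩]
    apply Finset.sum_congr rfl
    intro j _
    simp only [hC, dif_pos hi, dif_pos j.isLt, Fin.eta]
  have hcol' : ∀ j, j < n → ∑ i ∈ range n, C i j = 1 := by
    intro j hj
    rw [← Fin.sum_univ_eq_sum_range (fun i => C i j) n]
    rw [← hcol ⟨j, hj⟩]
    apply Finset.sum_congr rfl
    intro i _
    simp only [hC, dif_pos hj, dif_pos i.isLt, Fin.eta]
  have hperm' : ∀ F : ℝ → ℝ, ∑ j ∈ range n, F (A j) = ∑ i ∈ range n, F (L i) := by
    intro F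
    rw [← Fin.sum_univ_eq_sum_range (fun j => F (A j)) n,
      ← Fin.sum_univ_eq_sum_range (fun i => F (L i)) n]
    have h1 : ∀ j : Fin n, F (A (j : ℕ)) = F (hΘ.eigenvalues j) := by
      intro j; simp [hA, j.isLt]
    have h2 : ∀ i : Fin n, F (L (i : ℕ)) = F (hΘ.eigenvalues (e i)) := by
      intro i; simp [hL, i.isLt, hlam]
    rw [Finset.sum_congr rfl (fun j _ => h1 j), Finset.sum_congr rfl (fun i _ => h2 i)]
    exact (Equiv.sum_comp e (fun x => F (hΘ.eigenvalues x))).symm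
  have main := core_ineq' n A L U C hmono' hanti' hC0 hrow' hcol' hperm'
  have lhs_eq : ∑ i ∈ range n, U i * L i = ∑ i : Fin n, μ i * lam i := by
    rw [← Fin.sum_univ_eq_sum_range (fun i => U i * L i) n]
    apply Finset.sum_congr rfl
    intro i _
    simp [hU, hL, i.isLt]
  have rhs_eq : ∑ i ∈ range n, U i * ∑ j ∈ range n, A j * C i j
      = ∑ i : Fin n, μ i * (star (T i) ⬝ᵥ Θ.mulVec (T i)).re := by
    rw [← Fin.sum_univ_eq_sum_range (fun i => U i * ∑ j ∈ range n, A j * C i j) n]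
    apply Finset.sum_congr rfl
    intro i _
    have hinner : ∑ j ∈ range n, A j * C (i : ℕ) j
        = ∑ j : Fin n, hΘ.eigenvalues j * Complex.normSq (m i j) := by
      rw [← Fin.sum_univ_eq_sum_range (fun j => A j * C (i : ℕ) j) n]
      apply Finset.sum_congr rfl
      intro j _
      simp [hA, hC, i.isLt, j.isLt]
    rw [hinner, ← hq i]
    simp [hU, i.isLt]
  rw [lhs_eq, rhs_eq] at main
  exact main
end

section
/- Let n ≥ 2, let Γ ⊂ ℝⁿ be an open convex cone with vertex at the origin, symmetric under permutations of coordinates, containing the positive cone Γ_n, with ∂Γ ≠ ∅, and let f : Γ → ℝ be a C¹ concave function, symmetric under permutations of its arguments, with ∂f/∂λ_i > 0 on Γ for each i, and satisfying: for every σ < sup_Γ f and every λ ∈ Γ there exists T > 0 such that f(tλ) > σ for all t ≥ T. Then for any n×n complex Hermitian matrices A and B whose eigenvalue vectors satisfy λ(A) ∈ Γ and λ(B) ∈ Γ, one also has λ(A+B) ∈ Γ and f(λ(A+B)) > f(λ(A)). -/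
open Matrix in
lemma aux_ds (n : ℕ) (W : Matrix (Fin n) (Fin n) ℂ) (hW1 : star W * W = 1)
    (hW2 : W * star W = 1) (a : Fin n → ℝ) :
    ∃ S ∈ doublyStochastic ℝ (Fin n),
      ∀ i, (star W * Matrix.diagonal (Complex.ofReal ∘ a) * W) i i = ((S *ᵥ a) i : ℂ) := by
  refine ⟨Matrix.of fun i j => Complex.normSq (W j i), ?_, ?_⟩
  · rw [mem_doublyStochastic_iff_sum]
    refine ⟨fun i j => Complex.normSq_nonneg _, fun i => ?_, fun j => ?_⟩
    · have h := congrFun (congrFun hW1 i) i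
      simp only [Matrix.mul_apply, Matrix.star_apply, Matrix.one_apply_eq] at h
      have h2 : (↑(∑ j, Complex.normSq (W j i)) : ℂ) = 1 := by
        push_cast
        rw [← h]
        exact Finset.sum_congr rfl fun j _ => by
          rw [Complex.star_def, ← Complex.normSq_eq_conj_mul_self]
      exact_mod_cast h2
    · have h := congrFun (congrFun hW2 j) j
      simp only [Matrix.mul_apply, Matrix.star_apply, Matrix.one_apply_eq] at h
      have h2 : (↑(∑ i, Complex.normSq (W j i)) : ℂ) = 1 := by
        push_cast
        rw [← h]
        exact Finset.sum_congr rfl fun i _ => by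
          rw [Complex.star_def, ← Complex.mul_conj]
      exact_mod_cast h2
  · intro i
    have key : (star W * Matrix.diagonal (Complex.ofReal ∘ a) * W) i i
        = ∑ j, ((starRingEnd ℂ) (W j i) * (a j : ℂ)) * W j i := by
      rw [Matrix.mul_apply]
      refine Finset.sum_congr rfl fun j _ => ?_
      rw [Matrix.mul_diagonal, Matrix.star_apply, Complex.star_def, Function.comp_apply]
    rw [key]
    simp only [Matrix.mulVec, dotProduct, Matrix.of_apply]
    push_cast
    exact Finset.sum_congr rfl fun j _ => by
      rw [mul_comm ((starRingEnd ℂ) (W j i)) _, mul_assoc, ← Complex.normSq_eq_conj_mul_self]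
      push_cast
      ring

open Matrix in
lemma key_decomp (n : ℕ) (A B : Matrix (Fin n) (Fin n) ℂ)
    (hA : A.IsHermitian) (hB : B.IsHermitian) :
    ∃ S ∈ doublyStochastic ℝ (Fin n), ∃ T ∈ doublyStochastic ℝ (Fin n),
      (hA.add hB).eigenvalues = S *ᵥ hA.eigenvalues + T *ᵥ hB.eigenvalues := by
  set U : Matrix (Fin n) (Fin n) ℂ := ((hA.add hB).eigenvectorUnitary : Matrix (Fin n) (Fin n) ℂ)
  set V : Matrix (Fin n) (Fin n) ℂ := (hA.eigenvectorUnitary : Matrix (Fin n) (Fin n) ℂ)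
  set X : Matrix (Fin n) (Fin n) ℂ := (hB.eigenvectorUnitary : Matrix (Fin n) (Fin n) ℂ)
  have hU1 : star U * U = 1 := Unitary.star_mul_self_of_mem ((hA.add hB).eigenvectorUnitary).2
  have hU2 : U * star U = 1 := Unitary.mul_star_self_of_mem ((hA.add hB).eigenvectorUnitary).2
  have hV1 : star V * V = 1 := Unitary.star_mul_self_of_mem (hA.eigenvectorUnitary).2
  have hV2 : V * star V = 1 := Unitary.mul_star_self_of_mem (hA.eigenvectorUnitary).2
  have hX1 : star X * X = 1 := Unitary.star_mul_self_of_mem (hB.eigenvectorUnitary).2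
  have hX2 : X * star X = 1 := Unitary.mul_star_self_of_mem (hB.eigenvectorUnitary).2
  set WA := star V * U with hWA
  set WB := star X * U with hWB
  have hWA1 : star WA * WA = 1 := by
    rw [hWA, Matrix.star_mul, star_star, Matrix.mul_assoc, ← Matrix.mul_assoc V, hV2, Matrix.one_mul, hU1]
  have hWA2 : WA * star WA = 1 := by
    rw [hWA, Matrix.star_mul, star_star, Matrix.mul_assoc, ← Matrix.mul_assoc U, hU2, Matrix.one_mul, hV1]
  have hWB1 : star WB * WB = 1 := by
    rw [hWB, Matrix.star_mul, star_star, Matrix.mul_assoc, ← Matrix.mul_assoc X, hX2, Matrix.one_mul, hU1]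
  have hWB2 : WB * star WB = 1 := by
    rw [hWB, Matrix.star_mul, star_star, Matrix.mul_assoc, ← Matrix.mul_assoc U, hU2, Matrix.one_mul, hX1]
  obtain ⟨S, hS, hSa⟩ := aux_ds n WA hWA1 hWA2 hA.eigenvalues
  obtain ⟨T, hT, hTb⟩ := aux_ds n WB hWB1 hWB2 hB.eigenvalues
  refine ⟨S, hS, T, hT, ?_⟩
  have hdiag : Matrix.diagonal (Complex.ofReal ∘ (hA.add hB).eigenvalues)
      = star U * A * U + star U * B * U := by
    have hd0 := Matrix.IsHermitian.conjStarAlgAut_star_eigenvectorUnitary (hA.add hB)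
    simp only [Unitary.conjStarAlgAut_apply, Unitary.coe_star, star_star] at hd0
    rw [show (RCLike.ofReal : ℝ → ℂ) = Complex.ofReal from rfl] at hd0
    rw [← hd0, Matrix.mul_add, Matrix.add_mul]
  have hArw : star U * A * U = star WA * Matrix.diagonal (Complex.ofReal ∘ hA.eigenvalues) * WA := by
    have hsp := hA.spectral_theorem
    rw [show (RCLike.ofReal : ℝ → ℂ) = Complex.ofReal from rfl] at hsp
    simp only [Unitary.conjStarAlgAut_apply, Unitary.coe_star] at hsp
    conv_lhs => rw [hsp]
    rw [hWA, Matrix.star_mul, star_star]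
    simp only [Matrix.mul_assoc]
    rfl
  have hBrw : star U * B * U = star WB * Matrix.diagonal (Complex.ofReal ∘ hB.eigenvalues) * WB := by
    have hsp := hB.spectral_theorem
    rw [show (RCLike.ofReal : ℝ → ℂ) = Complex.ofReal from rfl] at hsp
    simp only [Unitary.conjStarAlgAut_apply, Unitary.coe_star] at hsp
    conv_lhs => rw [hsp]
    rw [hWB, Matrix.star_mul, star_star]
    simp only [Matrix.mul_assoc]
    rfl
  funext i
  have h := congrFun (congrFun hdiag i) i
  rw [Matrix.diagonal_apply_eq] at h
  rw [Matrix.add_apply, hArw, hBrw, hSa, hTb] at h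
  have : ((hA.add hB).eigenvalues i : ℂ) = (((S *ᵥ hA.eigenvalues) i + (T *ᵥ hB.eigenvalues) i : ℝ) : ℂ) := by
    push_cast; exact h
  exact_mod_cast this

lemma cone_add_mem {n : ℕ} {Γ : Set (Fin n → ℝ)} (hΓconv : Convex ℝ Γ)
    (hΓcone : ∀ x ∈ Γ, ∀ t : ℝ, 0 < t → t • x ∈ Γ) {x y : Fin n → ℝ}
    (hx : x ∈ Γ) (hy : y ∈ Γ) : x + y ∈ Γ := by
  have h := hΓconv hx hy (by norm_num : (0:ℝ) ≤ 1/2) (by norm_num : (0:ℝ) ≤ 1/2)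
    (by norm_num : (1/2 : ℝ) + 1/2 = 1)
  have h2 := hΓcone _ h 2 (by norm_num)
  have : (2:ℝ) • ((1/2 : ℝ) • x + (1/2 : ℝ) • y) = x + y := by
    rw [smul_add, smul_smul, smul_smul]
    norm_num
  rwa [this] at h2

lemma mono_aux {n : ℕ} {Γ : Set (Fin n → ℝ)} {f : (Fin n → ℝ) → ℝ}
    (hΓopen : IsOpen Γ) (hΓconv : Convex ℝ Γ)
    (hΓcone : ∀ x ∈ Γ, ∀ t : ℝ, 0 < t → t • x ∈ Γ)
    (hC1 : ContDiffOn ℝ 1 f Γ) (hconc : ConcaveOn ℝ Γ f)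
    (hstruct : ∀ σ : ℝ, (∃ y ∈ Γ, σ < f y) → ∀ x ∈ Γ, ∃ T > (0 : ℝ), ∀ t ≥ T, σ < f (t • x))
    {l m : Fin n → ℝ} (hl : l ∈ Γ) (hm : m ∈ Γ) : f l ≤ f (l + m) := by
  have hadd : l + m ∈ Γ := cone_add_mem hΓconv hΓcone hl hm
  refine le_of_forall_pos_le_add fun ε hε => ?_
  obtain ⟨T, hT0, hTT⟩ := hstruct (f l - ε) ⟨l, hl, by linarith⟩ m hm
  set x : ℕ → (Fin n → ℝ) := fun k => (1 - (k:ℝ)⁻¹) • l + m with hx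
  have hlim : Filter.Tendsto x Filter.atTop (nhds (l + m)) := by
    have h1 : Filter.Tendsto (fun k : ℕ => (1 - (k:ℝ)⁻¹)) Filter.atTop (nhds 1) := by
      have h0 := tendsto_inv_atTop_nhds_zero_nat (𝕜 := ℝ)
      have := Filter.Tendsto.sub (tendsto_const_nhds (x := (1:ℝ))) h0
      simpa using this
    have := (h1.smul_const l).add_const m
    simpa using this
  have hcont : Filter.Tendsto (fun k => f (x k)) Filter.atTop (nhds (f (l + m))) :=
    ((hC1.continuousOn.continuousAt (hΓopen.mem_nhds hadd)).tendsto).comp hlim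
  have hev : ∀ᶠ k in Filter.atTop, f l - ε ≤ f (x k) := by
    rw [Filter.eventually_atTop]
    refine ⟨max 2 ⌈T⌉₊, fun k hk => ?_⟩
    have hk2 : 2 ≤ k := le_trans (le_max_left _ _) hk
    have hk2' : (2:ℝ) ≤ (k:ℝ) := by exact_mod_cast hk2
    have hkT : T ≤ (k:ℝ) :=
      le_trans (Nat.le_ceil T) (Nat.cast_le.mpr (le_trans (le_max_right _ _) hk))
    have hkpos : (0:ℝ) < (k:ℝ) := by linarith
    have hs1 : (0:ℝ) < (k:ℝ)⁻¹ := inv_pos.mpr hkpos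
    have hs2 : (k:ℝ)⁻¹ ≤ 1 := by
      rw [inv_le_one_iff₀]
      right; linarith
    have hkm : (k:ℝ) • m ∈ Γ := hΓcone m hm (k:ℝ) hkpos
    have hfk : f l - ε < f ((k:ℝ) • m) := hTT (k:ℝ) hkT
    have hcc := hconc.2 hl hkm (by linarith : (0:ℝ) ≤ 1 - (k:ℝ)⁻¹) (le_of_lt hs1)
      (by ring : (1 - (k:ℝ)⁻¹) + (k:ℝ)⁻¹ = 1)
    have hxeq : (1 - (k:ℝ)⁻¹) • l + (k:ℝ)⁻¹ • ((k:ℝ) • m) = x k := by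
      rw [smul_smul, inv_mul_cancel₀ (ne_of_gt hkpos), one_smul]
    rw [hxeq] at hcc
    have hle : f l - ε ≤ (1 - (k:ℝ)⁻¹) • f l + (k:ℝ)⁻¹ • f ((k:ℝ) • m) := by
      simp only [smul_eq_mul]
      nlinarith
    linarith [le_trans hle hcc]
  have := ge_of_tendsto hcont hev
  linarith

set_option maxHeartbeats 1000000 in
set_option synthInstance.maxHeartbeats 400000 in
lemma local_incr {n : ℕ} {Γ : Set (Fin n → ℝ)} {f : (Fin n → ℝ) → ℝ}
    (hΓopen : IsOpen Γ) (hC1 : ContDiffOn ℝ 1 f Γ)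
    (hfi : ∀ x ∈ Γ, ∀ i : Fin n, 0 < fderiv ℝ f x (Pi.single i 1))
    (i : Fin n) {l : Fin n → ℝ} (hl : l ∈ Γ) (r : ℝ) (hr : 0 < r) :
    ∃ δ : ℝ, 0 < δ ∧ δ < r ∧ l + δ • (Pi.single i 1 : Fin n → ℝ) ∈ Γ ∧
      f l < f (l + δ • (Pi.single i 1 : Fin n → ℝ)) := by
  set e : Fin n → ℝ := Pi.single i 1 with he
  have hdiff : DifferentiableAt ℝ f l :=
    ((hC1.differentiableOn one_ne_zero) l hl).differentiableAt (hΓopen.mem_nhds hl)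
  have h0 : l + (0:ℝ) • e = l := by simp
  have hcurve : HasDerivAt (fun t : ℝ => l + t • e) e 0 := by
    have h1 : HasDerivAt (fun t : ℝ => t • e) ((1:ℝ) • e) 0 :=
      HasDerivAt.smul_const (F := Fin n → ℝ) (hasDerivAt_id (0:ℝ)) e
    have h2 := h1.const_add l
    simpa using h2
  have hg : HasDerivAt (fun t : ℝ => f (l + t • e)) (fderiv ℝ f l e) 0 := by
    have hF : HasFDerivAt f (fderiv ℝ f l) (l + (0:ℝ) • e) := by
      rw [h0]; exact hdiff.hasFDerivAt
    exact hF.comp_hasDerivAt 0 hcurve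
  set g : ℝ → ℝ := fun t => f (l + t • e) with hgdef
  have hd : 0 < fderiv ℝ f l e := hfi l hl i
  have hslope : Filter.Tendsto (slope g 0) (nhdsWithin 0 {(0:ℝ)}ᶜ) (nhds (fderiv ℝ f l e)) :=
    hasDerivAt_iff_tendsto_slope.mp hg
  have hslope' : Filter.Tendsto (slope g 0) (nhdsWithin 0 (Set.Ioi 0)) (nhds (fderiv ℝ f l e)) :=
    hslope.mono_left (nhdsWithin_mono 0 fun t ht => ne_of_gt ht)
  have hev1 : ∀ᶠ t in nhdsWithin 0 (Set.Ioi 0), 0 < slope g 0 t :=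
    hslope'.eventually (eventually_gt_nhds hd)
  have hc : Continuous fun t : ℝ => l + t • e := by continuity
  have hopen : {t : ℝ | (l + t • e ∈ Γ) ∧ t < r} ∈ nhds (0:ℝ) := by
    refine IsOpen.mem_nhds ((hΓopen.preimage hc).inter isOpen_Iio) ⟨by simpa using hl, hr⟩
  have hev2 : ∀ᶠ t in nhdsWithin 0 (Set.Ioi 0), (l + t • e ∈ Γ) ∧ t < r :=
    Filter.Eventually.filter_mono nhdsWithin_le_nhds hopen
  have hev3 : ∀ᶠ t in nhdsWithin 0 (Set.Ioi 0), t ∈ Set.Ioi (0:ℝ) := self_mem_nhdsWithin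
  obtain ⟨t, hts, ⟨htΓ, htr⟩, htpos⟩ := (hev1.and (hev2.and hev3)).exists
  refine ⟨t, htpos, htr, htΓ, ?_⟩
  have hslope_pos : 0 < (g t - g 0) / t := by
    have := hts
    rwa [slope_def_field, sub_zero] at this
  have : 0 < g t - g 0 := by
    by_contra hcon
    push_neg at hcon
    have : (g t - g 0) / t ≤ 0 := div_nonpos_of_nonpos_of_nonneg hcon (le_of_lt htpos)
    linarith
  have hg0 : g 0 = f l := by simp [hgdef]
  have hgt : g t = f (l + t • e) := rfl
  rw [hg0, hgt] at this
  exact lt_of_sub_pos this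

lemma strict_incr {n : ℕ} (hn : 2 ≤ n) {Γ : Set (Fin n → ℝ)} {f : (Fin n → ℝ) → ℝ}
    (hΓopen : IsOpen Γ) (hΓconv : Convex ℝ Γ)
    (hΓcone : ∀ x ∈ Γ, ∀ t : ℝ, 0 < t → t • x ∈ Γ)
    (hC1 : ContDiffOn ℝ 1 f Γ) (hconc : ConcaveOn ℝ Γ f)
    (hfi : ∀ x ∈ Γ, ∀ i : Fin n, 0 < fderiv ℝ f x (Pi.single i 1))
    (hstruct : ∀ σ : ℝ, (∃ y ∈ Γ, σ < f y) → ∀ x ∈ Γ, ∃ T > (0 : ℝ), ∀ t ≥ T, σ < f (t • x))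
    {l m : Fin n → ℝ} (hl : l ∈ Γ) (hm : m ∈ Γ) : f l < f (l + m) := by
  obtain ⟨r, hr, hball⟩ := Metric.isOpen_iff.mp hΓopen m hm
  have i : Fin n := ⟨0, by omega⟩
  obtain ⟨δ, hδ0, hδr, hlΓ, hlf⟩ := local_incr hΓopen hC1 hfi i hl r hr
  set e : Fin n → ℝ := Pi.single i 1 with he
  have hnorme : ‖e‖ ≤ 1 := by
    rw [pi_norm_le_iff_of_nonneg zero_le_one]
    intro j
    by_cases h : j = i
    · simp [he, h]
    · simp [he, Pi.single_apply, h]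
  have hmem : m - δ • e ∈ Γ := by
    apply hball
    rw [Metric.mem_ball, dist_eq_norm]
    have heq : m - δ • e - m = -(δ • e) := by abel
    rw [heq, norm_neg, norm_smul, Real.norm_eq_abs, abs_of_pos hδ0]
    calc δ * ‖e‖ ≤ δ * 1 := by nlinarith
      _ < r := by linarith
  calc f l < f (l + δ • e) := hlf
    _ ≤ f ((l + δ • e) + (m - δ • e)) :=
        mono_aux hΓopen hΓconv hΓcone hC1 hconc hstruct hlΓ hmem
    _ = f (l + m) := by rw [show (l + δ • e) + (m - δ • e) = l + m by abel]

open Matrix in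
lemma ds_mulVec_eq {n : ℕ} (w : Equiv.Perm (Fin n) → ℝ) (M : Matrix (Fin n) (Fin n) ℝ)
    (hwS : ∑ σ, w σ • σ.permMatrix ℝ = M) (u : Fin n → ℝ) (i : Fin n) :
    (M *ᵥ u) i = ∑ σ : Equiv.Perm (Fin n), w σ * u (σ i) := by
  subst hwS
  simp only [Matrix.mulVec, dotProduct, Matrix.sum_apply, Matrix.smul_apply,
    smul_eq_mul, Finset.sum_mul]
  rw [Finset.sum_comm]
  refine Finset.sum_congr rfl fun σ _ => ?_
  have hpm : ∀ j, (σ.permMatrix ℝ) i j = if σ i = j then (1:ℝ) else 0 := fun j => by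
    simp [Equiv.Perm.permMatrix, PEquiv.toMatrix_apply, Equiv.toPEquiv_apply]
  simp only [hpm, mul_ite, mul_one, mul_zero, ite_mul, zero_mul]
  simp [Finset.sum_ite_eq, Finset.sum_ite_eq']

/-- monotonicity of `F(A) = f(λ(A))` under addition of matrices with
eigenvalues in `Γ`. Let `Γ ⊂ ℝⁿ` (`n ≥ 2`) be an open convex symmetric cone with
vertex at the origin containing the positive cone and with nonempty boundary, and
let `f` be a symmetric `C¹` concave function on `Γ` with positive partial derivatives
satisfying the structural condition: for every `σ < sup_Γ f` and every `λ ∈ Γ`,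
`f(tλ) > σ` for all sufficiently large `t`. Then for Hermitian matrices `A`, `B`
with `λ(A) ∈ Γ` and `λ(B) ∈ Γ` we have `λ(A+B) ∈ Γ` and `f(λ(A+B)) > f(λ(A))`. -/
theorem stmt_5 (n : ℕ) (hn : 2 ≤ n) (Γ : Set (Fin n → ℝ)) (f : (Fin n → ℝ) → ℝ)
    (hΓopen : IsOpen Γ) (hΓconv : Convex ℝ Γ)
    (hΓcone : ∀ x ∈ Γ, ∀ t : ℝ, 0 < t → t • x ∈ Γ)
    (hΓsym : ∀ σ : Equiv.Perm (Fin n), ∀ x ∈ Γ, x ∘ σ ∈ Γ)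
    (hΓpos : {x : Fin n → ℝ | ∀ i, 0 < x i} ⊆ Γ)
    (hΓbd : (frontier Γ).Nonempty)
    (hC1 : ContDiffOn ℝ 1 f Γ)
    (hconc : ConcaveOn ℝ Γ f)
    (hfsym : ∀ σ : Equiv.Perm (Fin n), ∀ x ∈ Γ, f (x ∘ σ) = f x)
    (hfi : ∀ x ∈ Γ, ∀ i : Fin n, 0 < fderiv ℝ f x (Pi.single i 1))
    (hstruct : ∀ σ : ℝ, (∃ y ∈ Γ, σ < f y) → ∀ x ∈ Γ, ∃ T > (0 : ℝ), ∀ t ≥ T, σ < f (t • x))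
    (A B : Matrix (Fin n) (Fin n) ℂ)
    (hA : A.IsHermitian) (hB : B.IsHermitian)
    (hAΓ : hA.eigenvalues ∈ Γ) (hBΓ : hB.eigenvalues ∈ Γ) :
    (hA.add hB).eigenvalues ∈ Γ ∧ f hA.eigenvalues < f ((hA.add hB).eigenvalues) := by
  classical
  obtain ⟨S, hS, T, hT, hc⟩ := key_decomp n A B hA hB
  obtain ⟨w, hw0, hw1, hwS⟩ := exists_eq_sum_perm_of_mem_doublyStochastic hS
  obtain ⟨v, hv0, hv1, hvT⟩ := exists_eq_sum_perm_of_mem_doublyStochastic hT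
  set a := hA.eigenvalues with ha
  set b := hB.eigenvalues with hb
  set c := (hA.add hB).eigenvalues with hcdef
  set q : Equiv.Perm (Fin n) × Equiv.Perm (Fin n) → (Fin n → ℝ) := fun p => (a ∘ p.1) + (b ∘ p.2) with hq
  set Wt : Equiv.Perm (Fin n) × Equiv.Perm (Fin n) → ℝ := fun p => w p.1 * v p.2 with hWt
  have hW0 : ∀ p : Equiv.Perm (Fin n) × Equiv.Perm (Fin n), 0 ≤ Wt p := fun p => mul_nonneg (hw0 _) (hv0 _)
  have hWsum : ∑ p : Equiv.Perm (Fin n) × Equiv.Perm (Fin n), Wt p = 1 := by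
    rw [Fintype.sum_prod_type]
    simp only [hWt]
    rw [← Finset.sum_mul_sum]
    rw [hw1, hv1, one_mul]
  have hcq : c = ∑ p : Equiv.Perm (Fin n) × Equiv.Perm (Fin n), Wt p • q p := by
    funext i
    rw [hc]
    have h1 : (S.mulVec a) i = ∑ σ : Equiv.Perm (Fin n), w σ * a (σ i) := ds_mulVec_eq w S hwS a i
    have h2 : (T.mulVec b) i = ∑ τ : Equiv.Perm (Fin n), v τ * b (τ i) := ds_mulVec_eq v T hvT b i
    simp only [Pi.add_apply, h1, h2, Finset.sum_apply, Pi.smul_apply, smul_eq_mul]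
    rw [Fintype.sum_prod_type]
    have : ∀ σ : Equiv.Perm (Fin n), ∑ τ : Equiv.Perm (Fin n), Wt (σ, τ) * q (σ, τ) i
        = w σ * a (σ i) + w σ * ∑ τ : Equiv.Perm (Fin n), v τ * b (τ i) := by
      intro σ
      have : ∀ τ : Equiv.Perm (Fin n), Wt (σ, τ) * q (σ, τ) i
          = v τ * (w σ * a (σ i)) + w σ * (v τ * b (τ i)) := by
        intro τ
        simp only [hWt, hq, Pi.add_apply, Function.comp_apply]
        ring
      rw [Finset.sum_congr rfl fun τ _ => this τ, Finset.sum_add_distrib,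
        ← Finset.sum_mul, hv1, one_mul, ← Finset.mul_sum]
    rw [Finset.sum_congr rfl fun σ _ => this σ, Finset.sum_add_distrib,
      ← Finset.sum_mul, hw1, one_mul]
  have hqmem : ∀ p : Equiv.Perm (Fin n) × Equiv.Perm (Fin n), q p ∈ Γ := fun p =>
    cone_add_mem hΓconv hΓcone (hΓsym p.1 a hAΓ) (hΓsym p.2 b hBΓ)
  have hmemc : c ∈ Γ := by
    rw [hcq]
    exact hΓconv.sum_mem (fun p _ => hW0 p) hWsum (fun p _ => hqmem p)
  refine ⟨hmemc, ?_⟩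
  have hJ : ∑ p : Equiv.Perm (Fin n) × Equiv.Perm (Fin n), Wt p • f (q p) ≤ f c := by
    rw [hcq]
    exact hconc.le_map_sum (fun p _ => hW0 p) hWsum (fun p _ => hqmem p)
  have hstrictpt : ∀ p : Equiv.Perm (Fin n) × Equiv.Perm (Fin n), f a < f (q p) := by
    intro p
    have := strict_incr hn hΓopen hΓconv hΓcone hC1 hconc hfi hstruct
      (hΓsym p.1 a hAΓ) (hΓsym p.2 b hBΓ)
    rwa [hfsym p.1 a hAΓ] at this
  obtain ⟨p₀, -, hp₀⟩ := Finset.exists_lt_of_sum_lt (f := fun _ : Equiv.Perm (Fin n) × Equiv.Perm (Fin n) => (0:ℝ)) (g := Wt)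
    (by rw [hWsum]; simp)
  have hlt : f a < ∑ p : Equiv.Perm (Fin n) × Equiv.Perm (Fin n), Wt p • f (q p) := by
    have heq : f a = ∑ p : Equiv.Perm (Fin n) × Equiv.Perm (Fin n), Wt p • f a := by
      simp only [smul_eq_mul, ← Finset.sum_mul, hWsum, one_mul]
    rw [heq]
    refine Finset.sum_lt_sum (fun p _ => ?_) ⟨p₀, Finset.mem_univ _, ?_⟩
    · exact smul_le_smul_of_nonneg_left (le_of_lt (hstrictpt p)) (hW0 p)
    · exact (mul_lt_mul_iff_right₀ hp₀).mpr (hstrictpt p₀)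
  exact lt_of_lt_of_le hlt hJ
end
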